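/- arXiv:2511.03686 — 7 statements merged into one kernel-verified Lean document; each statement's English description precedes it below -/
import Mathlib

section
/- Let N ≥ 2 and let Q_0, …, Q_{N−1} be independent random variables, each exponentially distributed with rate 1. Then the expectation of (max_{z} Q_z)/(∑_{z} Q_z) is at most (2/N)(ln N + 3). In particular, when N = 2^n this bound equals (2/N)(n·ln 2 + 3). -/
open MeasureTheory ProbabilityTheory Real Set Filter
open scoped ENNReal NNReal


lemma pdfReal_one (x : ℝ) :
    exponentialPDFReal 1 x = (Ici (0:ℝ)).indicator (fun x => rexp (-x)) x := by
  rw [exponentialPDFReal, gammaPDFReal]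
  simp [Set.indicator, mem_Ici]

lemma expMeasure_integral {E : Type*} [NormedAddCommGroup E] [NormedSpace ℝ E] (g : ℝ → E) :
    ∫ x, g x ∂(expMeasure 1) = ∫ x in Ioi (0:ℝ), rexp (-x) • g x := by
  have h1 : expMeasure 1
      = volume.withDensity (fun x => ((exponentialPDFReal 1 x).toNNReal : ℝ≥0∞)) := rfl
  rw [h1, integral_withDensity_eq_integral_smul
    ((measurable_exponentialPDFReal 1).real_toNNReal) g]
  have : ∀ x : ℝ, (exponentialPDFReal 1 x).toNNReal • g x
      = (Ici (0:ℝ)).indicator (fun x => rexp (-x) • g x) x := by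
    intro x
    rw [pdfReal_one]
    by_cases hx : x ∈ Ici (0:ℝ) <;>
      simp [hx, NNReal.smul_def, Real.coe_toNNReal _ (exp_nonneg _)]
  simp_rw [this]
  rw [integral_indicator measurableSet_Ici, integral_Ici_eq_integral_Ioi]

lemma expMeasure_integrable_iff (g : ℝ → ℝ) (_hg : Measurable g) :
    Integrable g (expMeasure 1) ↔ IntegrableOn (fun x => rexp (-x) * g x) (Ioi (0:ℝ)) := by
  have h1 : expMeasure 1 = volume.withDensity (fun x => ENNReal.ofReal (exponentialPDFReal 1 x)) := rfl
  rw [h1, integrable_withDensity_iff (measurable_exponentialPDFReal 1).ennreal_ofReal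
    (Eventually.of_forall fun x => ENNReal.ofReal_lt_top)]
  have : ∀ x : ℝ, g x * (ENNReal.ofReal (exponentialPDFReal 1 x)).toReal
      = (Ici (0:ℝ)).indicator (fun x => rexp (-x) * g x) x := by
    intro x
    rw [ENNReal.toReal_ofReal (exponentialPDFReal_nonneg one_pos x), pdfReal_one]
    by_cases hx : x ∈ Ici (0:ℝ) <;> simp [hx, mul_comm]
  simp_rw [this]
  rw [integrable_indicator_iff measurableSet_Ici, integrableOn_Ici_iff_integrableOn_Ioi]

lemma exp_integrable_pow (n : ℕ) : Integrable (fun x : ℝ => x ^ n) (expMeasure 1) := by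
  rw [expMeasure_integrable_iff _ (by measurability)]
  refine ((Real.GammaIntegral_convergent (s := n + 1) (by positivity)).congr_fun ?_
    measurableSet_Ioi)
  intro x hx
  simp [show ((n : ℝ) + 1 - 1) = (n : ℝ) by ring, rpow_natCast]

lemma exp_moment_pow (n : ℕ) : ∫ x, x ^ n ∂(expMeasure 1) = (n.factorial : ℝ) := by
  rw [expMeasure_integral (fun x => x ^ n)]
  have := Real.Gamma_eq_integral (s := n + 1) (by positivity)
  rw [Real.Gamma_nat_eq_factorial n] at this
  rw [this]
  apply setIntegral_congr_fun measurableSet_Ioi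
  intro x hx
  simp [show ((n:ℝ) + 1 - 1) = (n : ℝ) by ring, rpow_natCast]

lemma exp_moment_one : ∫ x, x ∂(expMeasure 1) = 1 := by
  have := exp_moment_pow 1
  simpa using this

lemma exp_moment_sq : ∫ x, x ^ 2 ∂(expMeasure 1) = 2 := by
  have := exp_moment_pow 2
  norm_num [Nat.factorial] at this
  exact this

lemma expMeasure_Iio_zero : (expMeasure 1) (Iio (0:ℝ)) = 0 := by
  have h1 : expMeasure 1 = volume.withDensity (exponentialPDF 1) := rfl
  rw [h1, withDensity_apply _ measurableSet_Iio]
  exact lintegral_exponentialPDF_of_nonpos le_rfl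

lemma expMeasure_Ioi {t : ℝ} (ht : 0 ≤ t) :
    (expMeasure 1) (Ioi t) = ENNReal.ofReal (rexp (-t)) := by
  haveI := isProbabilityMeasure_expMeasure one_pos
  have h1 : expMeasure 1 = volume.withDensity (exponentialPDF 1) := rfl
  have hIic : (expMeasure 1) (Iic t) = ENNReal.ofReal (1 - rexp (-t)) := by
    rw [h1, withDensity_apply _ measurableSet_Iic,
      lintegral_exponentialPDF_eq_antiDeriv one_pos t, if_pos ht, one_mul]
  have hcompl : Ioi t = (Iic t)ᶜ := by simp
  rw [hcompl, measure_compl measurableSet_Iic (measure_ne_top _ _), measure_univ, hIic]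
  have hle : rexp (-t) ≤ 1 := exp_le_one_iff.mpr (by linarith)
  rw [show (1:ℝ≥0∞) = ENNReal.ofReal 1 by simp, ← ENNReal.ofReal_sub _ (by linarith)]
  norm_num


section Main

variable {Ω : Type*} [MeasurableSpace Ω] (μ : Measure Ω) [IsProbabilityMeasure μ]

theorem stmt0' (N : ℕ) (hN : 2 ≤ N) (Q : Fin N → Ω → ℝ)
    (hmeas : ∀ z, Measurable (Q z))
    (hindep : iIndepFun Q μ)
    (hlaw : ∀ z, Measure.map (Q z) μ = expMeasure 1) :
    (∫ ω, (⨆ z : Fin N, Q z ω) / (∑ z : Fin N, Q z ω) ∂μ)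
      ≤ (2 / N) * (Real.log N + 3) := by
  haveI : Nonempty (Fin N) := ⟨⟨0, by omega⟩⟩
  have hN0 : (0:ℝ) < N := by exact_mod_cast Nat.pos_of_ne_zero (by omega)
  have hN1 : (1:ℝ) ≤ N := by exact_mod_cast hN.trans' (by norm_num)
  -- per-coordinate facts
  have hid2 : Integrable (fun x : ℝ => x) (expMeasure 1) := by
    simpa using exp_integrable_pow 1
  have hQint : ∀ z, Integrable (Q z) μ := by
    intro z
    have h := integrable_map_measure (f := Q z) (g := fun x => x) (μ := μ)
      aestronglyMeasurable_id (hmeas z).aemeasurable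
    rw [hlaw z] at h
    exact h.mp hid2
  have hQexp : ∀ z, ∫ ω, Q z ω ∂μ = 1 := by
    intro z
    have h := integral_map (φ := Q z) (f := fun x => x) (μ := μ)
      (hmeas z).aemeasurable aestronglyMeasurable_id
    rw [hlaw z] at h
    rw [← h, exp_moment_one]
  have hQsqexp : ∀ z, ∫ ω, (Q z ω) ^ 2 ∂μ = 2 := by
    intro z
    have h := integral_map (φ := Q z) (f := fun x => x ^ 2) (μ := μ)
      (hmeas z).aemeasurable (by fun_prop)
    rw [hlaw z] at h
    rw [← h, exp_moment_sq]
  have hQmem : ∀ z, MemLp (Q z) 2 μ := by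
    intro z
    have h := memLp_map_measure_iff (f := Q z) (g := fun x => x) (p := 2) (μ := μ)
      aestronglyMeasurable_id (hmeas z).aemeasurable
    rw [hlaw z] at h
    exact h.mp ((memLp_two_iff_integrable_sq aestronglyMeasurable_id).mpr
      (by simpa using exp_integrable_pow 2))
  have hQvar : ∀ z, variance (Q z) μ = 1 := by
    intro z
    rw [variance_eq_sub (hQmem z)]
    have h2 : μ[(Q z) ^ 2] = 2 := by
      rw [show ((Q z) ^ 2 : Ω → ℝ) = fun ω => (Q z ω) ^ 2 from rfl]
      exact hQsqexp z
    rw [h2, hQexp z]; norm_num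
  have hQpos : ∀ᵐ ω ∂μ, ∀ z, 0 ≤ Q z ω := by
    rw [ae_all_iff]
    intro z
    have h0 : μ {ω | Q z ω < 0} = 0 := by
      have : {ω | Q z ω < 0} = Q z ⁻¹' (Iio 0) := rfl
      rw [this, ← Measure.map_apply (hmeas z) measurableSet_Iio, hlaw z, expMeasure_Iio_zero]
    rw [ae_iff]
    simpa [not_le] using h0
  set S : Ω → ℝ := fun ω => ∑ z, Q z ω with hSdef
  set M : Ω → ℝ := fun ω => ⨆ z, Q z ω with hMdef
  have hbdd : ∀ ω, BddAbove (Set.range fun z => Q z ω) :=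
    fun ω => (Set.finite_range _).bddAbove
  have hSmeas : Measurable S := Finset.measurable_sum Finset.univ (fun i _ => hmeas i)
  have hMmeas : Measurable M := by
    have h : M = Finset.univ.sup' Finset.univ_nonempty Q := by
      funext ω
      rw [Finset.sup'_apply]
      exact (Finset.sup'_univ_eq_ciSup fun z => Q z ω).symm
    rw [h]
    exact Finset.measurable_sup' _ (fun i _ => hmeas i)
  have hSint : Integrable S μ := integrable_finset_sum _ (fun i _ => hQint i)
  have hSexp : ∫ ω, S ω ∂μ = N := by
    rw [hSdef, integral_finset_sum _ (fun i _ => hQint i)]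
    simp [hQexp]
  -- pointwise facts under nonnegativity
  have hM0 : ∀ ω, (∀ z, 0 ≤ Q z ω) → 0 ≤ M ω := by
    intro ω h
    exact (h (Classical.arbitrary _)).trans (le_ciSup (hbdd ω) _)
  have hMS : ∀ ω, (∀ z, 0 ≤ Q z ω) → M ω ≤ S ω := by
    intro ω h
    exact ciSup_le fun z => Finset.single_le_sum (fun i _ => h i) (Finset.mem_univ z)
  have hS0 : ∀ ω, (∀ z, 0 ≤ Q z ω) → 0 ≤ S ω :=
    fun ω h => Finset.sum_nonneg fun i _ => h i
  have hMint : Integrable M μ := by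
    refine hSint.mono hMmeas.aestronglyMeasurable ?_
    filter_upwards [hQpos] with ω h
    rw [Real.norm_eq_abs, Real.norm_eq_abs, abs_of_nonneg (hM0 ω h), abs_of_nonneg (hS0 ω h)]
    exact hMS ω h
  -- expectation of max
  have hEM : ∫ ω, M ω ∂μ ≤ Real.log N + 1 := by
    have hMnn : 0 ≤ᵐ[μ] M := by filter_upwards [hQpos] with ω h; exact hM0 ω h
    rw [hMint.integral_eq_integral_meas_lt hMnn]
    have hexpint : IntegrableOn (fun t => rexp (-t)) (Ioi (0:ℝ)) := by
      simpa using exp_neg_integrableOn_Ioi 0 one_pos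
    have hmincont : Continuous (fun t : ℝ => min 1 ((N:ℝ) * rexp (-t))) :=
      continuous_const.min (continuous_const.mul (Real.continuous_exp.comp continuous_neg))
    have hhint : IntegrableOn (fun t => min 1 ((N:ℝ) * rexp (-t))) (Ioi (0:ℝ)) := by
      refine Integrable.mono (hexpint.const_mul (N:ℝ)) hmincont.aestronglyMeasurable ?_
      refine ae_of_all _ fun t => ?_
      have h1 : (0:ℝ) ≤ min 1 ((N:ℝ) * rexp (-t)) := le_min one_pos.le (by positivity)
      rw [Real.norm_eq_abs, Real.norm_eq_abs, abs_of_nonneg h1, abs_of_nonneg (by positivity)]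
      exact min_le_right _ _
    have hgle : ∀ᵐ t ∂(volume.restrict (Ioi (0:ℝ))),
        (μ {a | t < M a}).toReal ≤ min 1 ((N:ℝ) * rexp (-t)) := by
      rw [ae_restrict_iff' measurableSet_Ioi]
      refine ae_of_all _ fun t ht => ?_
      refine le_min ?_ ?_
      · calc (μ {a | t < M a}).toReal ≤ (μ univ).toReal :=
              ENNReal.toReal_mono (measure_ne_top _ _) (measure_mono (subset_univ _))
          _ = 1 := by simp
      · have hset : {a | t < M a} = ⋃ z, {a | t < Q z a} := by
          ext a
          simp only [mem_setOf_eq, mem_iUnion]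
          exact lt_ciSup_iff (hbdd a)
        have hz : ∀ z, μ {a | t < Q z a} = ENNReal.ofReal (rexp (-t)) := by
          intro z
          rw [show {a | t < Q z a} = Q z ⁻¹' (Ioi t) from rfl,
            ← Measure.map_apply (hmeas z) measurableSet_Ioi, hlaw z,
            expMeasure_Ioi (le_of_lt ht)]
        have hμle : μ {a | t < M a} ≤ (N : ℝ≥0∞) * ENNReal.ofReal (rexp (-t)) := by
          rw [hset]
          refine (measure_iUnion_fintype_le μ _).trans ?_
          simp [hz, Finset.sum_const]
        calc (μ {a | t < M a}).toReal
            ≤ ((N : ℝ≥0∞) * ENNReal.ofReal (rexp (-t))).toReal :=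
              ENNReal.toReal_mono
                (ENNReal.mul_ne_top (ENNReal.natCast_ne_top N) ENNReal.ofReal_ne_top) hμle
          _ = (N:ℝ) * rexp (-t) := by
              rw [ENNReal.toReal_mul, ENNReal.toReal_ofReal (exp_nonneg _)]
              simp
    have step1 := integral_mono_of_nonneg
      (ae_of_all _ fun t => ENNReal.toReal_nonneg) hhint hgle
    refine step1.trans ?_
    have hlogN : 0 ≤ Real.log N := Real.log_nonneg hN1
    have hexplog : rexp (-Real.log N) = ((N:ℝ))⁻¹ := by
      rw [Real.exp_neg, Real.exp_log hN0]
    have hsplit : Ioi (0:ℝ) = Ioc 0 (Real.log N) ∪ Ioi (Real.log N) :=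
      (Ioc_union_Ioi_eq_Ioi hlogN).symm
    have hint1 : IntegrableOn (fun t => min 1 ((N:ℝ) * rexp (-t))) (Ioc 0 (Real.log N)) :=
      hhint.mono_set (by rw [hsplit]; exact subset_union_left)
    have hint2 : IntegrableOn (fun t => min 1 ((N:ℝ) * rexp (-t))) (Ioi (Real.log N)) :=
      hhint.mono_set (by rw [hsplit]; exact subset_union_right)
    rw [hsplit, setIntegral_union (Ioc_disjoint_Ioi le_rfl) measurableSet_Ioi hint1 hint2]
    have h1 : ∫ t in Ioc (0:ℝ) (Real.log N), min 1 ((N:ℝ) * rexp (-t)) = Real.log N := by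
      rw [setIntegral_congr_fun measurableSet_Ioc
        (g := fun _ => (1:ℝ)) (fun t ht => min_eq_left ?_)]
      · rw [setIntegral_const, smul_eq_mul, mul_one, measureReal_def, Real.volume_Ioc,
          ENNReal.toReal_ofReal (by linarith)]
        ring
      · have : rexp (-Real.log N) ≤ rexp (-t) := Real.exp_le_exp.mpr (by linarith [ht.2])
        rw [hexplog] at this
        calc (1:ℝ) = N * (N:ℝ)⁻¹ := by field_simp
          _ ≤ N * rexp (-t) := by gcongr
    have h2 : ∫ t in Ioi (Real.log N), min 1 ((N:ℝ) * rexp (-t)) = 1 := by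
      rw [setIntegral_congr_fun measurableSet_Ioi
        (g := fun t => (N:ℝ) * rexp (-t)) (fun t ht => min_eq_right ?_)]
      · rw [integral_const_mul, integral_exp_neg_Ioi, hexplog]
        field_simp
      · have : rexp (-t) ≤ rexp (-Real.log N) := Real.exp_le_exp.mpr (by
          simp only [mem_Ioi] at ht; linarith)
        rw [hexplog] at this
        calc (N:ℝ) * rexp (-t) ≤ N * (N:ℝ)⁻¹ := by gcongr
          _ = 1 := by field_simp
    rw [h1, h2]
  -- Chebyshev
  have hcheb : (μ {ω | S ω < N / 2}).toReal ≤ 4 / N := by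
    have hpair : Set.Pairwise ↑(Finset.univ : Finset (Fin N))
        fun i j => IndepFun (Q i) (Q j) μ := fun i _ j _ hij => hindep.indepFun hij
    have hSfun : S = ∑ i ∈ Finset.univ, Q i := by
      funext ω; rw [hSdef]; simp [Finset.sum_apply]
    have hmemS : MemLp S 2 μ := by
      rw [hSfun]; exact memLp_finset_sum' _ (fun i _ => hQmem i)
    have hvarS : variance S μ = N := by
      rw [hSfun, IndepFun.variance_sum (fun i _ => hQmem i) hpair]
      simp [hQvar]
    have hchebE := meas_ge_le_variance_div_sq (μ := μ) hmemS (c := (N:ℝ)/2) (by positivity)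
    rw [hvarS] at hchebE
    have hsub : {ω | S ω < (N:ℝ)/2} ⊆ {ω | (N:ℝ)/2 ≤ |S ω - μ[S]|} := by
      intro ω hω
      simp only [mem_setOf_eq] at hω ⊢
      rw [show μ[S] = ∫ ω, S ω ∂μ from rfl, hSexp, abs_sub_comm]
      exact le_trans (by linarith) (le_abs_self _)
    calc (μ {ω | S ω < (N:ℝ)/2}).toReal
        ≤ (ENNReal.ofReal ((N:ℝ) / ((N:ℝ)/2)^2)).toReal :=
          ENNReal.toReal_mono ENNReal.ofReal_ne_top ((measure_mono hsub).trans hchebE)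
      _ = 4 / N := by
          rw [ENNReal.toReal_ofReal (by positivity)]
          field_simp
          ring
  -- pointwise inequality
  have hpt : ∀ᵐ ω ∂μ, M ω / S ω
      ≤ (2 / N) * M ω + Set.indicator {ω | S ω < N / 2} (fun _ => (1:ℝ)) ω := by
    filter_upwards [hQpos] with ω h
    by_cases hc : S ω < N / 2
    · rw [Set.indicator_of_mem (show ω ∈ {ω | S ω < (N:ℝ)/2} from hc) (fun _ => (1:ℝ))]
      have h1 : M ω / S ω ≤ 1 := by
        rcases eq_or_lt_of_le (hS0 ω h) with hz | hz
        · rw [← hz, div_zero]; norm_num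
        · exact div_le_one_of_le₀ (hMS ω h) hz.le
      have h2 : 0 ≤ 2 / (N:ℝ) * M ω := by
        have := hM0 ω h; positivity
      linarith
    · rw [Set.indicator_of_notMem (show ω ∉ {ω | S ω < (N:ℝ)/2} from hc) (fun _ => (1:ℝ)), add_zero]
      push_neg at hc
      have hhalf : (0:ℝ) < N / 2 := by positivity
      calc M ω / S ω ≤ M ω / (N / 2) := by
            gcongr
            exact hM0 ω h
        _ = 2 / N * M ω := by field_simp
  -- combine
  have hindint : Integrable (Set.indicator {ω | S ω < N / 2} (fun _ => (1:ℝ))) μ :=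
    (integrable_const (1:ℝ)).indicator (show MeasurableSet {ω | S ω < (N:ℝ)/2} from measurableSet_lt hSmeas measurable_const)
  have hrhsint : Integrable (fun ω => (2 / N) * M ω
      + Set.indicator {ω | S ω < N / 2} (fun _ => (1:ℝ)) ω) μ :=
    (hMint.const_mul _).add hindint
  have hnn : 0 ≤ᵐ[μ] fun ω => M ω / S ω := by
    filter_upwards [hQpos] with ω h
    exact div_nonneg (hM0 ω h) (hS0 ω h)
  calc (∫ ω, M ω / S ω ∂μ)
      ≤ ∫ ω, ((2 / N) * M ω
          + Set.indicator {ω | S ω < N / 2} (fun _ => (1:ℝ)) ω) ∂μ :=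
        integral_mono_of_nonneg hnn hrhsint hpt
    _ = (2 / N) * (∫ ω, M ω ∂μ) + (μ {ω | S ω < N / 2}).toReal := by
        rw [integral_add (hMint.const_mul _) hindint,
          integral_indicator_const (1:ℝ) (show MeasurableSet {ω | S ω < (N:ℝ)/2} from measurableSet_lt hSmeas measurable_const), smul_eq_mul, mul_one, integral_const_mul, measureReal_def]
    _ ≤ (2 / N) * (Real.log N + 1) + 4 / N := by
        gcongr
    _ = (2 / N) * (Real.log N + 3) := by field_simp; ring

end Main

/-- If `Q 0, …, Q (N-1)` are independent `Exp(1)` random variables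
(`N ≥ 2`), then `E[(max_z Q z) / (∑ z Q z)] ≤ (2/N) (ln N + 3)`; moreover when
`N = 2^n` this bound equals `(2/N) (n ln 2 + 3)`. -/
theorem stmt0 {Ω : Type*} [MeasurableSpace Ω] (μ : Measure Ω) [IsProbabilityMeasure μ]
    (N : ℕ) (hN : 2 ≤ N) (Q : Fin N → Ω → ℝ)
    (hmeas : ∀ z, Measurable (Q z))
    (hindep : iIndepFun Q μ)
    (hlaw : ∀ z, Measure.map (Q z) μ = expMeasure 1) :
    (∫ ω, (⨆ z : Fin N, Q z ω) / (∑ z : Fin N, Q z ω) ∂μ)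
      ≤ (2 / N) * (Real.log N + 3)
    ∧ ∀ n : ℕ, N = 2 ^ n →
        (2 / (N : ℝ)) * (Real.log N + 3) = (2 / N) * (n * Real.log 2 + 3) := by
  refine ⟨stmt0' μ N hN Q hmeas hindep hlaw, ?_⟩
  intro n hn
  subst hn
  have hlog : Real.log ((2 ^ n : ℕ) : ℝ) = n * Real.log 2 := by
    push_cast
    rw [Real.log_pow]
  rw [hlog]
end

section
/- Let n ≥ 1, N = 2^n, m ≥ 1, and let (Q^{(i)}_z)_{i∈[m], z∈Fin N} be i.i.d. random variables each exponentially distributed with rate 1. Define P^{(i)}(z) = Q^{(i)}_z / ∑_{w} Q^{(i)}_w for each i. Then E[(1/m) ∑_{i∈[m]} max_{z} P^{(i)}(z)] ≤ (2/N)(n·ln 2 + 3). Equivalently, E[(1/m) max_{z⃗∈(Fin N)^m} ∑_{i∈[m]} P^{(i)}(z^{(i)})] ≤ (2/N)(n·ln 2 + 3). -/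
open scoped ENNReal
open MeasureTheory ProbabilityTheory Real Set Filter

section Helpers

lemma expMeasure_one_Iic_zero : (expMeasure 1) (Set.Iic 0) = 0 := by
  have h : (expMeasure 1) (Set.Iic 0) = ∫⁻ y in Set.Iic (0:ℝ), exponentialPDF 1 y := by
    rw [expMeasure, gammaMeasure, withDensity_apply _ measurableSet_Iic]
    rfl
  rw [h, lintegral_exponentialPDF_eq_antiDeriv one_pos 0]
  norm_num

lemma lintegral_expMeasure (f : ℝ → ℝ) (hf : Measurable f) :
    ∫⁻ x, ENNReal.ofReal (f x) ∂(expMeasure 1)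
      = ∫⁻ x in Set.Ioi 0, ENNReal.ofReal (f x * rexp (-x)) := by
  have hpdf : expMeasure 1 = (volume : Measure ℝ).withDensity (exponentialPDF 1) := rfl
  have hm : Measurable (exponentialPDF 1) := (measurable_exponentialPDFReal 1).ennreal_ofReal
  rw [hpdf, lintegral_withDensity_eq_lintegral_mul _ hm hf.ennreal_ofReal]
  have hsplit := lintegral_add_compl (μ := (volume : Measure ℝ))
    (exponentialPDF 1 * fun x => ENNReal.ofReal (f x)) measurableSet_Iic (A := Set.Iic 0)
  rw [Set.compl_Iic] at hsplit
  rw [← hsplit]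
  have h1 : ∫⁻ x in Set.Iic (0:ℝ), (exponentialPDF 1 * fun x => ENNReal.ofReal (f x)) x = 0 := by
    rw [Measure.restrict_congr_set Iio_ae_eq_Iic.symm]
    have hz : ∫⁻ x in Set.Iio (0:ℝ), (exponentialPDF 1 * fun x => ENNReal.ofReal (f x)) x
        = ∫⁻ _x in Set.Iio (0:ℝ), (0:ℝ≥0∞) :=
      setLIntegral_congr_fun measurableSet_Iio
        (fun x (hx : x < 0) => by simp [exponentialPDF_of_neg hx])
    rw [hz, lintegral_zero]
  rw [h1, zero_add]
  refine setLIntegral_congr_fun measurableSet_Ioi (fun x hx => ?_)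
  have hx0 : (0:ℝ) ≤ x := le_of_lt hx
  simp only [Pi.mul_apply, exponentialPDF_of_nonneg hx0, one_mul]
  rw [← ENNReal.ofReal_mul (exp_nonneg _)]
  ring_nf

lemma integrable_expMeasure {f : ℝ → ℝ} (hf : Measurable f) (h0 : ∀ x, 0 ≤ f x)
    (hI : IntegrableOn (fun x => f x * rexp (-x)) (Set.Ioi 0)) :
    Integrable f (expMeasure 1) := by
  refine ⟨hf.aestronglyMeasurable, ?_⟩
  rw [hasFiniteIntegral_iff_ofReal (ae_of_all _ h0), lintegral_expMeasure f hf]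
  exact lt_of_le_of_lt (lintegral_ofReal_le_lintegral_enorm _) hI.2

lemma integral_expMeasure {f : ℝ → ℝ} (hf : Measurable f) (h0 : ∀ x, 0 ≤ f x)
    (hI : IntegrableOn (fun x => f x * rexp (-x)) (Set.Ioi 0)) :
    ∫ x, f x ∂(expMeasure 1) = ∫ x in Set.Ioi 0, f x * rexp (-x) := by
  rw [integral_eq_lintegral_of_nonneg_ae (ae_of_all _ h0) hf.aestronglyMeasurable,
    lintegral_expMeasure f hf,
    ← ofReal_integral_eq_lintegral_ofReal hI
      (ae_of_all _ (fun x => mul_nonneg (h0 x) (exp_nonneg _)))]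
  exact ENNReal.toReal_ofReal (integral_nonneg (fun x => mul_nonneg (h0 x) (exp_nonneg _)))

lemma integrableOn_max_sub (a : ℝ) (ha : 0 ≤ a) :
    IntegrableOn (fun x => max (x - a) 0 * rexp (-x)) (Set.Ioi 0) := by
  have h := Real.GammaIntegral_convergent (by norm_num : (0:ℝ) < 2)
  refine Integrable.mono h ?_ ?_
  · exact (((measurable_id.sub_const a).max measurable_const).mul
      (measurable_exp.comp measurable_neg)).aestronglyMeasurable
  · refine (ae_restrict_iff' measurableSet_Ioi).2 (ae_of_all _ (fun x hx => ?_))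
    have hx0 : (0:ℝ) < x := hx
    have h1 : max (x - a) 0 ≤ x := by
      apply max_le (by linarith) hx0.le
    have h2 : (0:ℝ) ≤ max (x - a) 0 := le_max_right _ _
    rw [Real.norm_eq_abs, Real.norm_eq_abs, abs_mul, abs_of_nonneg h2,
      abs_of_nonneg (exp_nonneg _), abs_mul, abs_of_nonneg (exp_nonneg _)]
    rw [show (2:ℝ) - 1 = 1 by norm_num, Real.rpow_one, abs_of_nonneg hx0.le]
    rw [mul_comm (rexp (-x)) x]
    exact mul_le_mul_of_nonneg_right h1 (exp_nonneg _)

lemma integral_max_sub (a : ℝ) (ha : 0 < a) :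
    ∫ x in Set.Ioi 0, max (x - a) 0 * rexp (-x) = rexp (-a) := by
  have hI := integrableOn_max_sub a ha.le
  have hu : Set.Ioc 0 a ∪ Set.Ioi a = Set.Ioi (0:ℝ) := Set.Ioc_union_Ioi_eq_Ioi ha.le
  rw [← hu] at hI ⊢
  rw [setIntegral_union (Set.Ioc_disjoint_Ioi le_rfl) measurableSet_Ioi
    (hI.mono_set Set.subset_union_left) (hI.mono_set Set.subset_union_right)]
  have h1 : ∫ x in Set.Ioc (0:ℝ) a, max (x - a) 0 * rexp (-x) = 0 := by
    have hz : ∀ x ∈ Set.Ioc (0:ℝ) a, max (x - a) 0 * rexp (-x) = (fun _ => (0:ℝ)) x := by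
      intro x hx
      have : x - a ≤ 0 := by linarith [hx.2]
      simp [max_eq_right this]
    rw [setIntegral_congr_fun measurableSet_Ioc hz, integral_zero]
  have h2 : ∫ x in Set.Ioi a, max (x - a) 0 * rexp (-x) = rexp (-a) := by
    have hcong : ∀ x ∈ Set.Ioi a, max (x - a) 0 * rexp (-x) = (fun y => (y - a) * rexp (-y)) x := by
      intro x hx
      have : (0:ℝ) ≤ x - a := by linarith [hx.out]
      simp [max_eq_left this]
    rw [setIntegral_congr_fun measurableSet_Ioi hcong]
    have hderiv : ∀ x ∈ Set.Ici a,
        HasDerivAt (fun y => -(y - a + 1) * rexp (-y)) ((x - a) * rexp (-x)) x := by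
      intro x _
      have h1 : HasDerivAt (fun y : ℝ => -(y - a + 1)) (-1) x := by
        exact (((hasDerivAt_id x).sub_const a).add_const 1).neg
      have h2 : HasDerivAt (fun y : ℝ => rexp (-y)) (-rexp (-x)) x := by
        simpa using ((hasDerivAt_id x).neg).exp
      have := h1.mul h2
      refine this.congr_deriv ?_
      ring
    have hint : IntegrableOn (fun x => (x - a) * rexp (-x)) (Set.Ioi a) := by
      exact (((integrableOn_max_sub a ha.le).mono_set
        (fun x (hx : x ∈ Set.Ioi a) => lt_of_lt_of_le ha (le_of_lt hx))).congr_fun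
        (fun x hx => hcong x hx) measurableSet_Ioi)
    have htend : Tendsto (fun y => -(y - a + 1) * rexp (-y)) atTop (nhds 0) := by
      have t1 : Tendsto (fun y : ℝ => y * rexp (-y)) atTop (nhds 0) := by
        simpa using Real.tendsto_pow_mul_exp_neg_atTop_nhds_zero 1
      have t2 : Tendsto (fun y : ℝ => rexp (-y)) atTop (nhds 0) :=
        Real.tendsto_exp_neg_atTop_nhds_zero
      have := (t1.neg.add ((t2.const_mul (a - 1))))
      have heq : (fun y : ℝ => -(y * rexp (-y)) + (a - 1) * rexp (-y))
          = fun y => -(y - a + 1) * rexp (-y) := by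
        funext y; ring
      rw [heq] at this
      simpa using this
    rw [integral_Ioi_of_hasDerivAt_of_tendsto' hderiv hint htend]
    norm_num
  rw [h1, h2, zero_add]

lemma integral_exp_neg_sq : ∫ x in Set.Ioi (0:ℝ), rexp (-1 * x) * rexp (-x) = 1/2 := by
  have heq : ∀ x : ℝ, rexp (-1 * x) * rexp (-x) = rexp (-2 * x) := by
    intro x; rw [← Real.exp_add]; ring_nf
  rw [setIntegral_congr_fun measurableSet_Ioi (fun x _ => heq x)]
  have h := integral_comp_mul_left_Ioi (fun y => rexp (-y)) 0 (by norm_num : (0:ℝ) < 2)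
  simp only [mul_zero, neg_mul] at h ⊢
  rw [h, integral_exp_neg_Ioi_zero, smul_eq_mul]
  norm_num

lemma integrableOn_exp_neg_sq : IntegrableOn (fun x => rexp (-1 * x) * rexp (-x)) (Set.Ioi (0:ℝ)) := by
  have heq : ∀ x : ℝ, rexp (-1 * x) * rexp (-x) = rexp (-2 * x) := by
    intro x; rw [← Real.exp_add]; ring_nf
  have hfe : (fun x : ℝ => rexp (-1 * x) * rexp (-x)) = fun x => rexp (-2 * x) := funext heq
  rw [IntegrableOn, hfe]
  exact exp_neg_integrableOn_Ioi 0 (by norm_num : (0:ℝ) < 2)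

lemma exp_neg_le_inv_two_mul {t : ℝ} (ht : 0 < t) : rexp (-t) ≤ 1 / (2 * t) := by
  have h2 : 1 + t/2 ≤ rexp (t/2) := by linarith [Real.add_one_le_exp (t/2)]
  have h3 : (1 + t/2)^2 ≤ rexp t := by
    have : (rexp (t/2))^2 = rexp t := by
      rw [sq, ← Real.exp_add]; ring_nf
    nlinarith [Real.exp_pos (t/2)]
  have h4 : 2 * t ≤ rexp t := by nlinarith [sq_nonneg (1 - t/2)]
  rw [Real.exp_neg, one_div]
  exact inv_anti₀ (by linarith) h4

lemma final_arith (N : ℕ) (hN2 : 2 ≤ N) :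
    (Real.log N + 1) / ((11/20) * N) + rexp ((11/20) * N) * (1/2:ℝ)^N
      ≤ (2 / N) * (Real.log N + 3) := by
  set x : ℝ := (N : ℝ) with hxdef
  have hx : (2:ℝ) ≤ x := by simpa [hxdef] using (Nat.cast_le (α := ℝ)).2 hN2
  have hx0 : (0:ℝ) < x := by linarith
  have hL : 0 ≤ Real.log x := Real.log_nonneg (by linarith)
  set L := Real.log x with hLdef
  have hd : (0:ℝ) < Real.log 2 - 11/20 := by
    have := Real.log_two_gt_d9; norm_num at this ⊢; linarith
  set d : ℝ := Real.log 2 - 11/20 with hddef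
  have hpow : rexp ((11/20) * x) * (1/2:ℝ)^N = rexp (-(d * x)) := by
    have h2 : ((2:ℝ))^N = rexp (Real.log 2 * x) := by
      rw [← Real.rpow_natCast (2:ℝ) N, Real.rpow_def_of_pos (by norm_num : (0:ℝ) < 2)]
    have : (1/2:ℝ)^N = rexp (-(Real.log 2 * x)) := by
      rw [one_div, inv_pow, h2, Real.exp_neg]
    rw [this, ← Real.exp_add, hddef]
    ring_nf
  rw [hpow]
  have hcher : rexp (-(d * x)) ≤ 1 / (2 * (d * x)) :=
    exp_neg_le_inv_two_mul (mul_pos hd hx0)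
  have e1 : (L + 1) / ((11/20) * x) = ((20/11) * (L + 1)) / x := by
    field_simp
  have e2 : 1 / (2 * (d * x)) = (1 / (2 * d)) / x := by
    rw [div_div]
    ring_nf
  have e3 : (2 / x) * (L + 3) = (2 * (L + 3)) / x := by ring
  have hdbound : 1 / (2 * d) ≤ 7/2 := by
    rw [div_le_iff₀ (by positivity)]
    have := Real.log_two_gt_d9
    nlinarith
  calc (L + 1) / ((11/20) * x) + rexp (-(d * x))
      ≤ ((20/11) * (L + 1)) / x + (1 / (2 * d)) / x := by
        rw [← e1, ← e2]; linarith
    _ ≤ (2 * (L + 3)) / x := by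
        rw [← add_div, div_le_div_iff₀ hx0 hx0]
        nlinarith
    _ = (2 / x) * (L + 3) := by ring

end Helpers

/-- Let `N = 2^n`, and let `(Q i z)` for `i ∈ Fin m`, `z ∈ Fin N` be
i.i.d. `Exp(1)` random variables. With `P i z = Q i z / ∑ w, Q i w` (so that each
`P i` is a flat Dirichlet `Dir(1^N)` random distribution), both
`E[(1/m) ∑ i, max_z P i z]` and `E[(1/m) max_{z⃗} ∑ i, P i (z⃗ i)]` are at most
`(2/N)(n ln 2 + 3)`. -/
theorem stmt1 {Ω : Type*} [MeasurableSpace Ω] (μ : Measure Ω) [IsProbabilityMeasure μ]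
    (n m : ℕ) (hn : 1 ≤ n) (hm : 1 ≤ m) (N : ℕ) (hN : N = 2 ^ n)
    (Q : Fin m × Fin N → Ω → ℝ)
    (hmeas : ∀ p, Measurable (Q p))
    (hindep : iIndepFun Q μ)
    (hlaw : ∀ p, Measure.map (Q p) μ = expMeasure 1)
    (P : Fin m → Fin N → Ω → ℝ)
    (hP : ∀ i z ω, P i z ω = Q (i, z) ω / ∑ w : Fin N, Q (i, w) ω) :
    (∫ ω, (1 / (m : ℝ)) * ∑ i : Fin m, ⨆ z : Fin N, P i z ω ∂μ)
      ≤ (2 / N) * (n * Real.log 2 + 3)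
    ∧ (∫ ω, (1 / (m : ℝ)) * ⨆ zvec : Fin m → Fin N, ∑ i : Fin m, P i (zvec i) ω ∂μ)
      ≤ (2 / N) * (n * Real.log 2 + 3) := by
  -- basic facts
  have hN2 : 2 ≤ N := by
    rw [hN]
    calc 2 = 2^1 := (pow_one 2).symm
    _ ≤ 2^n := Nat.pow_le_pow_right (by norm_num) hn
  have hNpos : 0 < N := by omega
  haveI : NeZero N := ⟨by omega⟩
  have hNR : (1:ℝ) < (N:ℝ) := by exact_mod_cast hN2.trans_lt' one_lt_two
  have hNR0 : (0:ℝ) < (N:ℝ) := by linarith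
  set a : ℝ := Real.log N with hadef
  have ha : 0 < a := Real.log_pos hNR
  set c : ℝ := 11/20 with hcdef
  have hc0 : (0:ℝ) < c := by norm_num
  have hcN : 0 < c * N := by positivity
  -- measurability
  have hPeq : ∀ i z, P i z = fun ω => Q (i, z) ω / ∑ w : Fin N, Q (i, w) ω :=
    fun i z => funext (hP i z)
  have hSmeas : ∀ i : Fin m, Measurable (fun ω => ∑ w : Fin N, Q (i, w) ω) :=
    fun i => Finset.measurable_sum _ (fun w _ => hmeas (i, w))
  have hPmeas : ∀ i z, Measurable (P i z) := by
    intro i z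
    rw [hPeq]
    exact (hmeas (i, z)).div (hSmeas i)
  have hsupmeas : ∀ i, Measurable (fun ω => ⨆ z : Fin N, P i z ω) :=
    fun i => Measurable.iSup (fun z => hPmeas i z)
  -- almost-everywhere positivity
  have hae : ∀ᵐ ω ∂μ, ∀ p : Fin m × Fin N, 0 < Q p ω := by
    rw [ae_all_iff]
    intro p
    have h0 : μ (Q p ⁻¹' Set.Iic 0) = 0 := by
      have := Measure.map_apply (μ := μ) (hmeas p) (measurableSet_Iic (a := (0:ℝ)))
      rw [hlaw p, expMeasure_one_Iic_zero] at this
      exact this.symm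
    rw [ae_iff]
    have hset : {ω | ¬ 0 < Q p ω} = Q p ⁻¹' Set.Iic 0 := by ext ω; simp [not_lt]
    rw [hset]
    exact h0
  haveI hFN : Nonempty (Fin N) := ⟨⟨0, hNpos⟩⟩
  haveI hFm : Nonempty (Fin m) := ⟨⟨0, hm⟩⟩
  -- transfer lemmas from the exponential law
  have hfmax : Measurable (fun x : ℝ => max (x - a) 0) :=
    (measurable_id.sub_const a).max measurable_const
  have hfmax0 : ∀ x : ℝ, 0 ≤ max (x - a) 0 := fun x => le_max_right _ _
  have hIntMax : Integrable (fun x => max (x - a) 0) (expMeasure 1) :=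
    integrable_expMeasure hfmax hfmax0 (integrableOn_max_sub a ha.le)
  have hint1 : ∀ p, Integrable (fun ω => max (Q p ω - a) 0) μ := by
    intro p
    exact (integrable_map_measure hfmax.aestronglyMeasurable (hmeas p).aemeasurable).mp
      (by rw [hlaw p]; exact hIntMax)
  have hval1 : ∀ p, ∫ ω, max (Q p ω - a) 0 ∂μ = 1 / (N:ℝ) := by
    intro p
    have h1 : ∫ ω, max (Q p ω - a) 0 ∂μ = ∫ x, max (x - a) 0 ∂(expMeasure 1) := by
      rw [← hlaw p, integral_map (hmeas p).aemeasurable hfmax.aestronglyMeasurable]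
    rw [h1, integral_expMeasure hfmax hfmax0 (integrableOn_max_sub a ha.le),
      integral_max_sub a ha, hadef, Real.exp_neg, Real.exp_log hNR0, one_div]
  have hfexp : Measurable (fun x : ℝ => rexp (-1 * x)) :=
    (measurable_id.const_mul (-1)).exp
  have hfexp0 : ∀ x : ℝ, 0 ≤ rexp (-1 * x) := fun x => (exp_pos _).le
  have hintexp : ∀ p, Integrable (fun ω => rexp (-1 * Q p ω)) μ := by
    intro p
    exact (integrable_map_measure hfexp.aestronglyMeasurable (hmeas p).aemeasurable).mp
      (by rw [hlaw p]; exact integrable_expMeasure hfexp hfexp0 integrableOn_exp_neg_sq)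
  have hmgf : ∀ p, mgf (Q p) μ (-1) = 1/2 := by
    intro p
    unfold mgf
    have h1 : ∫ ω, rexp (-1 * Q p ω) ∂μ = ∫ x, rexp (-1 * x) ∂(expMeasure 1) := by
      rw [← hlaw p, integral_map (hmeas p).aemeasurable hfexp.aestronglyMeasurable]
    calc (∫ ω, rexp (-1 * Q p ω) ∂μ) = ∫ x, rexp (-1 * x) ∂(expMeasure 1) := h1
      _ = ∫ x in Set.Ioi 0, rexp (-1 * x) * rexp (-x) :=
          integral_expMeasure hfexp hfexp0 integrableOn_exp_neg_sq
      _ = 1/2 := integral_exp_neg_sq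
  -- integrability of the sup
  have hintsup : ∀ i, Integrable (fun ω => ⨆ z : Fin N, P i z ω) μ := by
    intro i
    refine Integrable.mono' (integrable_const (1:ℝ)) (hsupmeas i).aestronglyMeasurable ?_
    filter_upwards [hae] with ω hω
    have hQpos : ∀ w : Fin N, 0 < Q (i, w) ω := fun w => hω (i, w)
    have hS0 : 0 < ∑ w : Fin N, Q (i, w) ω :=
      Finset.sum_pos (fun w _ => hQpos w) Finset.univ_nonempty
    have h01 : ∀ z : Fin N, 0 ≤ P i z ω ∧ P i z ω ≤ 1 := by
      intro z
      rw [hP i z ω]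
      constructor
      · exact div_nonneg (hQpos z).le hS0.le
      · exact (div_le_one hS0).2
          (Finset.single_le_sum (fun w _ => (hQpos w).le) (Finset.mem_univ z))
    have hub : (⨆ z : Fin N, P i z ω) ≤ 1 := ciSup_le (fun z => (h01 z).2)
    have hlb : (0:ℝ) ≤ ⨆ z : Fin N, P i z ω :=
      le_trans (h01 (Classical.arbitrary _)).1
        (le_ciSup (f := fun z : Fin N => P i z ω)
          (Set.Finite.bddAbove (Set.finite_range _)) (Classical.arbitrary _))
    rw [Real.norm_eq_abs, abs_le]
    exact ⟨by linarith, hub⟩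
  -- the key per-i bound
  have key : ∀ i : Fin m,
      (∫ ω, (⨆ z : Fin N, P i z ω) ∂μ) ≤ (2 / N) * (n * Real.log 2 + 3) := by
    intro i
    have hEm : MeasurableSet {ω | (∑ w : Fin N, Q (i, w) ω) < c * N} :=
      measurableSet_lt (hSmeas i) measurable_const
    set E : Set Ω := {ω | (∑ w : Fin N, Q (i, w) ω) < c * N} with hEdef
    set g1 : Ω → ℝ := fun ω => (a + ∑ z : Fin N, max (Q (i, z) ω - a) 0) / (c * N) with hg1def
    set g2 : Ω → ℝ := E.indicator (fun _ => (1:ℝ)) with hg2def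
    have hg1int : Integrable g1 μ :=
      ((integrable_const a).add (integrable_finset_sum _ (fun z _ => hint1 (i, z)))).div_const _
    have hg2int : Integrable g2 μ := (integrable_const (1:ℝ)).indicator hEm
    -- pointwise bound
    have hpoint : ∀ᵐ ω ∂μ, (⨆ z : Fin N, P i z ω) ≤ g1 ω + g2 ω := by
      filter_upwards [hae] with ω hω
      have hQpos : ∀ w : Fin N, 0 < Q (i, w) ω := fun w => hω (i, w)
      have hS0 : 0 < ∑ w : Fin N, Q (i, w) ω :=
        Finset.sum_pos (fun w _ => hQpos w) Finset.univ_nonempty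
      have hsumnn : 0 ≤ ∑ z : Fin N, max (Q (i, z) ω - a) 0 :=
        Finset.sum_nonneg (fun z _ => le_max_right _ _)
      have hg1nn : 0 ≤ g1 ω := div_nonneg (by linarith) hcN.le
      have hg2nn : 0 ≤ g2 ω := Set.indicator_nonneg (fun _ _ => zero_le_one) ω
      apply ciSup_le
      intro z
      rw [hP i z ω]
      have hQleS : Q (i, z) ω ≤ ∑ w : Fin N, Q (i, w) ω :=
        Finset.single_le_sum (fun w _ => (hQpos w).le) (Finset.mem_univ z)
      rcases lt_or_ge (∑ w : Fin N, Q (i, w) ω) (c * N) with hcase | hcase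
      · have h1 : Q (i, z) ω / ∑ w : Fin N, Q (i, w) ω ≤ 1 := (div_le_one hS0).2 hQleS
        have h2 : g2 ω = 1 := by
          rw [hg2def, Set.indicator_of_mem (show ω ∈ E from hcase)]
        linarith
      · have h3 : Q (i, z) ω ≤ a + ∑ w : Fin N, max (Q (i, w) ω - a) 0 := by
          have hs := Finset.single_le_sum (f := fun w : Fin N => max (Q (i, w) ω - a) 0)
            (fun w _ => le_max_right _ _) (Finset.mem_univ z)
          have hm := le_max_left (Q (i, z) ω - a) (0:ℝ)
          linarith
        calc Q (i, z) ω / ∑ w : Fin N, Q (i, w) ω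
            ≤ Q (i, z) ω / (c * N) :=
              div_le_div_of_nonneg_left (hQpos z).le hcN hcase
          _ ≤ g1 ω := by
              rw [hg1def]
              exact (div_le_div_iff_of_pos_right hcN).mpr h3
          _ ≤ g1 ω + g2 ω := le_add_of_nonneg_right hg2nn
    have step1 : (∫ ω, (⨆ z : Fin N, P i z ω) ∂μ) ≤ ∫ ω, (g1 ω + g2 ω) ∂μ :=
      integral_mono_ae (hintsup i) (hg1int.add hg2int) hpoint
    have hintg : ∫ ω, (g1 ω + g2 ω) ∂μ = (a + 1) / (c * N) + (μ E).toReal := by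
      rw [integral_add hg1int hg2int]
      congr 1
      · rw [hg1def]
        rw [integral_div]
        rw [integral_add (integrable_const a) (integrable_finset_sum _ (fun z _ => hint1 (i, z)))]
        rw [integral_const]
        rw [integral_finset_sum _ (fun z _ => hint1 (i, z))]
        have : ∀ z : Fin N, z ∈ Finset.univ → (∫ ω, max (Q (i, z) ω - a) 0 ∂μ) = 1 / (N:ℝ) :=
          fun z _ => hval1 (i, z)
        rw [Finset.sum_congr rfl this, Finset.sum_const, Finset.card_univ, Fintype.card_fin,
          nsmul_eq_mul]
        have hNne : (N:ℝ) ≠ 0 := ne_of_gt hNR0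
        rw [probReal_univ]
        simp only [ENNReal.toReal_one, smul_eq_mul, one_mul]
        rw [mul_one_div, div_self hNne]
      · rw [hg2def, integral_indicator_const _ hEm]
        simp
        rfl
    -- Chernoff bound for the measure of E
    have hcherE : (μ E).toReal ≤ rexp (c * N) * (1/2:ℝ)^N := by
      set e : Fin N ↪ Fin m × Fin N :=
        ⟨fun z => (i, z), fun z w h => by simpa using h⟩ with hedef
      set s : Finset (Fin m × Fin N) := Finset.univ.map e with hsdef
      have hcard : s.card = N := by simp [hsdef]
      have hXapp : ∀ ω, (∑ p ∈ s, Q p) ω = ∑ w : Fin N, Q (i, w) ω := by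
        intro ω
        rw [Finset.sum_apply, hsdef, Finset.sum_map]
        rfl
      have hintS : Integrable (fun ω => rexp (-1 * (∑ p ∈ s, Q p) ω)) μ :=
        hindep.integrable_exp_mul_sum hmeas (fun p _ => hintexp p)
      have hcher := measure_le_le_exp_mul_mgf (μ := μ) (X := ∑ p ∈ s, Q p) (c * N)
        (by norm_num : (-1:ℝ) ≤ 0) hintS
      rw [hindep.mgf_sum hmeas s] at hcher
      have hprod : (∏ p ∈ s, mgf (Q p) μ (-1)) = (1/2:ℝ)^N := by
        rw [Finset.prod_congr rfl (fun p _ => hmgf p), Finset.prod_const, hcard]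
      rw [hprod] at hcher
      have hsub : E ⊆ {ω | (∑ p ∈ s, Q p) ω ≤ c * N} := by
        intro ω hω
        rw [Set.mem_setOf_eq, hXapp]
        exact le_of_lt hω
      refine le_trans (ENNReal.toReal_mono (measure_ne_top μ _) (measure_mono hsub)) ?_
      refine le_of_le_of_eq hcher ?_
      rw [neg_neg, one_mul]
    -- combine
    have hlogN : Real.log N = n * Real.log 2 := by
      rw [hN]
      push_cast
      rw [Real.log_pow]
    have hfinal := final_arith N hN2
    calc (∫ ω, (⨆ z : Fin N, P i z ω) ∂μ)
        ≤ (a + 1) / (c * N) + (μ E).toReal := step1.trans_eq hintg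
      _ ≤ (a + 1) / (c * N) + rexp (c * N) * (1/2:ℝ)^N := by linarith
      _ ≤ (2 / N) * (Real.log N + 3) := by
          rw [hadef, hcdef]
          exact hfinal
      _ = (2 / N) * (n * Real.log 2 + 3) := by rw [hlogN]
  -- conclusion
  set B : ℝ := (2 / N) * (n * Real.log 2 + 3) with hBdef
  have hmR : (0:ℝ) < (m:ℝ) := by exact_mod_cast hm
  have h1 : (∫ ω, (1 / (m : ℝ)) * ∑ i : Fin m, ⨆ z : Fin N, P i z ω ∂μ)
      = (1 / (m:ℝ)) * ∑ i : Fin m, ∫ ω, (⨆ z : Fin N, P i z ω) ∂μ := by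
    rw [integral_const_mul, integral_finset_sum _ (fun i _ => hintsup i)]
  have hsumB : (1 / (m:ℝ)) * (∑ i : Fin m, ∫ ω, (⨆ z : Fin N, P i z ω) ∂μ) ≤ B := by
    have hsum : (∑ i : Fin m, ∫ ω, (⨆ z : Fin N, P i z ω) ∂μ) ≤ (m:ℝ) * B := by
      calc (∑ i : Fin m, ∫ ω, (⨆ z : Fin N, P i z ω) ∂μ) ≤ ∑ _i : Fin m, B :=
            Finset.sum_le_sum (fun i _ => key i)
        _ = (m:ℝ) * B := by
            rw [Finset.sum_const, Finset.card_univ, Fintype.card_fin, nsmul_eq_mul]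
    calc (1 / (m:ℝ)) * (∑ i : Fin m, ∫ ω, (⨆ z : Fin N, P i z ω) ∂μ)
        ≤ (1 / (m:ℝ)) * ((m:ℝ) * B) := by
          apply mul_le_mul_of_nonneg_left hsum (by positivity)
      _ = B := by field_simp
  have hpart1 : (∫ ω, (1 / (m : ℝ)) * ∑ i : Fin m, ⨆ z : Fin N, P i z ω ∂μ) ≤ B := by
    rw [h1]; exact hsumB
  refine ⟨hpart1, ?_⟩
  -- second part: the iterated sup equals the sum of sups
  have heq : ∀ ω, (⨆ zvec : Fin m → Fin N, ∑ i : Fin m, P i (zvec i) ω)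
      = ∑ i : Fin m, ⨆ z : Fin N, P i z ω := by
    intro ω
    apply le_antisymm
    · apply ciSup_le
      intro zvec
      apply Finset.sum_le_sum
      intro i _
      exact le_ciSup (f := fun z : Fin N => P i z ω)
        (Set.Finite.bddAbove (Set.finite_range _)) (zvec i)
    · have hchoice : ∀ i : Fin m, ∃ z : Fin N, ∀ w, P i w ω ≤ P i z ω := by
        intro i
        obtain ⟨z, hz⟩ := Finite.exists_max (fun z : Fin N => P i z ω)
        exact ⟨z, hz⟩
      choose w hw using hchoice
      have hsum : (∑ i : Fin m, ⨆ z : Fin N, P i z ω) = ∑ i : Fin m, P i (w i) ω := by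
        refine Finset.sum_congr rfl (fun i _ => ?_)
        exact le_antisymm (ciSup_le (hw i))
          (le_ciSup (f := fun z : Fin N => P i z ω)
            (Set.Finite.bddAbove (Set.finite_range _)) (w i))
      rw [hsum]
      exact le_ciSup (f := fun zvec : Fin m → Fin N => ∑ i : Fin m, P i (zvec i) ω)
        (Set.Finite.bddAbove (Set.finite_range _)) w
  have : (∫ ω, (1 / (m : ℝ)) * ⨆ zvec : Fin m → Fin N, ∑ i : Fin m, P i (zvec i) ω ∂μ)
      = ∫ ω, (1 / (m : ℝ)) * ∑ i : Fin m, ⨆ z : Fin N, P i z ω ∂μ := by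
    apply integral_congr_ae
    exact ae_of_all _ (fun ω => congrArg (fun t => (1 / (m:ℝ)) * t) (heq ω))
  rw [this]
  exact hpart1
end

section
/- Let n ≥ 1, N = 2^n, let P be a probability mass function on Fin N with max_z P(z) ≤ 4·(ln N)/N, and let z_1, …, z_k be i.i.d. samples from P. Then for every integer j with 1 ≤ j ≤ k, the probability that there exists some s ∈ Fin N occurring at least j times among z_1, …, z_k is at most (4k·ln N)^j / (j · N^{j−1}). -/
open MeasureTheory ProbabilityTheory Real

/-- Let `N = 2^n` (`n ≥ 1`) and let `z 1, …, z k` be i.i.d. samples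
from a PMF `P` on `Fin N` with `max_s P s ≤ 4 ln N / N`. Then for every `1 ≤ j ≤ k`,
the probability that some bitstring occurs at least `j` times among the samples is at
most `(4 k ln N)^j / (j * N^(j-1))`. -/
theorem stmt3 {Ω : Type*} [MeasurableSpace Ω] (μ : Measure Ω) [IsProbabilityMeasure μ]
    (n N k : ℕ) (hn : 1 ≤ n) (hN : N = 2 ^ n)
    (P : PMF (Fin N))
    (hp : ∀ s : Fin N, (P s).toReal ≤ 4 * Real.log N / N)
    (z : Fin k → Ω → Fin N)
    (hmeas : ∀ i, Measurable (z i))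
    (hindep : iIndepFun z μ)
    (hlaw : ∀ i, Measure.map (z i) μ = P.toMeasure)
    (j : ℕ) (hj1 : 1 ≤ j) (hjk : j ≤ k) :
    μ {ω | ∃ s : Fin N, j ≤ (Finset.univ.filter (fun i : Fin k => z i ω = s)).card}
      ≤ ENNReal.ofReal ((4 * k * Real.log N) ^ j / (j * (N : ℝ) ^ (j - 1))) := by
  have hN2 : (2:ℕ) ≤ N := by
    rw [hN]; calc (2:ℕ) = 2^1 := rfl
    _ ≤ 2^n := Nat.pow_le_pow_right (by norm_num) hn
  have hNpos : (0:ℝ) < N := by positivity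
  have hlogN : 0 ≤ Real.log N := Real.log_nonneg (by exact_mod_cast hN2.trans' (by norm_num))
  set r : ℝ := 4 * Real.log N / N with hr
  have hr0 : 0 ≤ r := by positivity
  -- each single probability
  have hsingle : ∀ (i : Fin k) (s : Fin N), μ (z i ⁻¹' {s}) = P s := by
    intro i s
    rw [← Measure.map_apply (hmeas i) (measurableSet_singleton s), hlaw i,
      PMF.toMeasure_apply_singleton _ _ (measurableSet_singleton s)]
  have hPle : ∀ s : Fin N, P s ≤ ENNReal.ofReal r := by
    intro s
    rw [← ENNReal.ofReal_toReal (P.apply_ne_top s)]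
    exact ENNReal.ofReal_le_ofReal (hp s)
  -- event inclusion
  have hincl : {ω | ∃ s : Fin N, j ≤ (Finset.univ.filter (fun i : Fin k => z i ω = s)).card}
      ⊆ ⋃ s ∈ (Finset.univ : Finset (Fin N)),
        ⋃ T ∈ Finset.powersetCard j (Finset.univ : Finset (Fin k)),
          ⋂ i ∈ T, z i ⁻¹' {s} := by
    intro ω hω
    obtain ⟨s, hs⟩ := hω
    obtain ⟨T, hTsub, hTcard⟩ := Finset.exists_subset_card_eq hs
    refine Set.mem_biUnion (Finset.mem_univ s) ?_
    refine Set.mem_biUnion (Finset.mem_powersetCard.2 ⟨Finset.subset_univ T, hTcard⟩) ?_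
    refine Set.mem_biInter fun i hi => ?_
    have := hTsub hi
    simp only [Finset.mem_filter] at this
    exact this.2
  refine (measure_mono hincl).trans ?_
  refine (measure_biUnion_finset_le _ _).trans ?_
  have hinner : ∀ s : Fin N,
      μ (⋃ T ∈ Finset.powersetCard j (Finset.univ : Finset (Fin k)),
          ⋂ i ∈ T, z i ⁻¹' {s}) ≤ (Nat.choose k j : ENNReal) * ENNReal.ofReal r ^ j := by
    intro s
    refine (measure_biUnion_finset_le _ _).trans ?_
    have hcardsum : (Finset.powersetCard j (Finset.univ : Finset (Fin k))).card
        = Nat.choose k j := by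
      simp [Finset.card_powersetCard]
    calc ∑ T ∈ Finset.powersetCard j (Finset.univ : Finset (Fin k)),
          μ (⋂ i ∈ T, z i ⁻¹' {s})
        ≤ ∑ T ∈ Finset.powersetCard j (Finset.univ : Finset (Fin k)),
          ENNReal.ofReal r ^ j := by
          refine Finset.sum_le_sum fun T hT => ?_
          have hTcard : T.card = j := (Finset.mem_powersetCard.1 hT).2
          have := hindep.meas_biInter (S := T) (s := fun i => z i ⁻¹' {s})
            (fun i _ => ⟨{s}, measurableSet_singleton s, rfl⟩)
          rw [this]
          calc ∏ i ∈ T, μ (z i ⁻¹' {s}) = ∏ _i ∈ T, (P s : ENNReal) := by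
                refine Finset.prod_congr rfl fun i _ => hsingle i s
            _ = (P s) ^ j := by rw [Finset.prod_const, hTcard]
            _ ≤ ENNReal.ofReal r ^ j := pow_le_pow_left' (hPle s) j
      _ = (Nat.choose k j : ENNReal) * ENNReal.ofReal r ^ j := by
          rw [Finset.sum_const, hcardsum, nsmul_eq_mul]
  calc ∑ s ∈ (Finset.univ : Finset (Fin N)),
        μ (⋃ T ∈ Finset.powersetCard j (Finset.univ : Finset (Fin k)),
          ⋂ i ∈ T, z i ⁻¹' {s})
      ≤ ∑ _s ∈ (Finset.univ : Finset (Fin N)),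
        (Nat.choose k j : ENNReal) * ENNReal.ofReal r ^ j :=
        Finset.sum_le_sum fun s _ => hinner s
    _ = (N : ENNReal) * ((Nat.choose k j : ENNReal) * ENNReal.ofReal r ^ j) := by
        simp [Finset.sum_const, nsmul_eq_mul]
    _ ≤ ENNReal.ofReal ((4 * k * Real.log N) ^ j / (j * (N : ℝ) ^ (j - 1))) := by
        rw [← ENNReal.ofReal_pow hr0, ← ENNReal.ofReal_natCast (Nat.choose k j),
          ← ENNReal.ofReal_natCast N, ← ENNReal.ofReal_mul (by positivity),
          ← ENNReal.ofReal_mul (by positivity)]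
        refine ENNReal.ofReal_le_ofReal ?_
        -- real arithmetic
        have hchoose : (j : ℝ) * (Nat.choose k j : ℝ) ≤ (k : ℝ) ^ j := by
          have h1 : j * Nat.choose k j ≤ k ^ j := by
            calc j * Nat.choose k j ≤ j.factorial * Nat.choose k j :=
                  Nat.mul_le_mul_right _ (Nat.self_le_factorial j)
              _ = k.descFactorial j := (Nat.descFactorial_eq_factorial_mul_choose k j).symm
              _ ≤ k ^ j := Nat.descFactorial_le_pow k j
          exact_mod_cast h1
        have hrpow : r ^ j = (4 * Real.log N) ^ j / (N : ℝ) ^ j := by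
          rw [hr, div_pow]
        rw [hrpow]
        have hNj : (N : ℝ) ^ j = (N : ℝ) * (N : ℝ) ^ (j - 1) := by
          rw [← pow_succ']
          congr 1
          omega
        have hjpos : (0:ℝ) < j := by exact_mod_cast hj1
        rw [show (N:ℝ) * ((Nat.choose k j : ℝ) * ((4 * Real.log N) ^ j / (N:ℝ) ^ j))
            = ((N:ℝ) * ((Nat.choose k j : ℝ) * (4 * Real.log N) ^ j)) / (N:ℝ) ^ j from by ring]
        rw [div_le_div_iff₀ (by positivity) (by positivity)]
        calc (N : ℝ) * ((Nat.choose k j : ℝ) * (4 * Real.log N) ^ j) * ((j:ℝ) * (N : ℝ) ^ (j - 1))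
            = ((j:ℝ) * (Nat.choose k j : ℝ)) * (4 * Real.log N) ^ j * ((N:ℝ) * (N : ℝ) ^ (j-1)) := by
              ring
          _ ≤ (k : ℝ) ^ j * (4 * Real.log N) ^ j * ((N:ℝ) * (N : ℝ) ^ (j-1)) := by
              refine mul_le_mul_of_nonneg_right (mul_le_mul_of_nonneg_right hchoose ?_) ?_
              · positivity
              · positivity
          _ = (4 * (k:ℝ) * Real.log N) ^ j * (N : ℝ) ^ j := by
              rw [hNj]; rw [← mul_pow]; ring_nf
end

section
/- Fix n ≥ 50, N = 2^n, integers m ≥ 1 and k ≥ 1 with k ≤ 2^{n/2} and m, n ≤ 10^6, and δ ∈ [0,1]. For each i ∈ [m] let P^{(i)} be a probability mass function on Fin N with max_z P^{(i)}(z) ≤ 4·(ln N)/N. On a common probability space, let (Z_j^{(i)})_{j∈[k], i∈[m]} be mutually independent random variables with Z_j^{(i)} distributed according to P^{(i)}, and let Z⃗ = (Z^{(1)},…,Z^{(m)}) be any (Fin N)^m-valued random variable on the same space. If (1/m)·∑_{i∈[m]} Pr[Z^{(i)} ∈ {Z_j^{(i)} : j ∈ [k]}] ≥ 1 − δ, then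 the Shannon entropy of Z⃗ in bits satisfies H[Z⃗] ≥ m·[n(1 − δ) − log₂ n − log₂ k − 3]. -/
open MeasureTheory ProbabilityTheory Real

private lemma auxPart {Ω : Type*} [MeasurableSpace Ω] (μ : Measure Ω) {τ : Type*} [Fintype τ]
    (A : Set Ω) (D : τ → Set Ω) (hD : ∀ t, MeasurableSet (A ∩ D t))
    (hcov : ∀ ω, ∃! t, ω ∈ D t) :
    μ A = ∑ t, μ (A ∩ D t) := by
  have hA : A = ⋃ t, A ∩ D t := by
    ext ω
    simp only [Set.mem_iUnion, Set.mem_inter_iff]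
    constructor
    · intro h
      obtain ⟨t, ht, -⟩ := hcov ω
      exact ⟨t, h, ht⟩
    · rintro ⟨t, h, -⟩; exact h
  have hdisj : Pairwise (Function.onFun Disjoint fun t => A ∩ D t) := by
    intro t t' htt'
    refine Set.disjoint_left.mpr fun ω h1 h2 => htt' ?_
    exact (hcov ω).unique h1.2 h2.2
  calc μ A = μ (⋃ t, A ∩ D t) := by rw [← hA]
    _ = ∑' t, μ (A ∩ D t) := measure_iUnion hdisj hD
    _ = ∑ t, μ (A ∩ D t) := tsum_fintype _

private lemma auxA {Ω : Type*} [MeasurableSpace Ω] (μ : Measure Ω) {m k N : ℕ}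
    (Zs : Fin k × Fin m → Ω → Fin N)
    (hindep : iIndepFun Zs μ)
    (v : Fin m → Fin N) (s : Finset (Fin m)) :
    μ (⋂ i ∈ s, ⋃ j : Fin k, Zs (j, i) ⁻¹' {v i}) ≤
      ∏ i ∈ s, ∑ j : Fin k, μ (Zs (j, i) ⁻¹' {v i}) := by
  classical
  rw [Finset.prod_sum]
  have hsub : (⋂ i ∈ s, ⋃ j : Fin k, Zs (j, i) ⁻¹' {v i}) ⊆
      ⋃ p ∈ s.pi (fun _ => (Finset.univ : Finset (Fin k))),
        ⋂ x ∈ s.attach, Zs (p x.1 x.2, x.1) ⁻¹' {v x.1} := by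
    intro ω hω
    simp only [Set.mem_iInter, Set.mem_iUnion] at hω
    choose jj hjj using hω
    refine Set.mem_iUnion₂.mpr ⟨fun a ha => jj a ha, Finset.mem_pi.mpr fun a ha => Finset.mem_univ _, ?_⟩
    exact Set.mem_iInter₂.mpr fun x hx => hjj x.1 x.2
  refine (measure_mono hsub).trans ((measure_biUnion_finset_le _ _).trans ?_)
  refine Finset.sum_le_sum fun p hp => ?_
  have h1 := (iIndepFun_iff (fun _ => inferInstance) Zs μ).mp hindep
    (s.attach.image fun x => (p x.1 x.2, x.1))
    (f' := fun ji => Zs ji ⁻¹' {v ji.2})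
    (fun ji _ => ⟨{v ji.2}, measurableSet_singleton _, rfl⟩)
  rw [Finset.set_biInter_finset_image] at h1
  rw [Finset.prod_image (fun x hx y hy hxy => Subtype.ext (congrArg Prod.snd hxy))] at h1
  exact le_of_eq h1
private lemma auxB {σ : Type*} [Fintype σ] (f : σ → ℝ) (hf : ∀ s, 0 ≤ f s) :
    ∑ s, -(f s * Real.logb 2 (f s)) ≤
      -((∑ s, f s) * Real.logb 2 (∑ s, f s)) + (∑ s, f s) * Real.logb 2 (Fintype.card σ) := by
  classical
  set q := ∑ s, f s with hq
  have hq0 : 0 ≤ q := Finset.sum_nonneg fun s _ => hf s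
  rcases eq_or_lt_of_le hq0 with hq0' | hqpos
  · have hz : ∀ s ∈ Finset.univ, f s = 0 :=
      (Finset.sum_eq_zero_iff_of_nonneg (fun s _ => hf s)).mp hq0'.symm
    have : ∀ s : σ, f s = 0 := fun s => hz s (Finset.mem_univ s)
    simp [this, ← hq0']
  · have hne : Nonempty σ := by
      by_contra h
      rw [not_nonempty_iff] at h
      rw [hq, Finset.sum_of_isEmpty] at hqpos
      exact lt_irrefl 0 hqpos
    have hcard : (0:ℝ) < (Fintype.card σ : ℝ) := by
      exact_mod_cast Fintype.card_pos
    set c : ℝ := (Fintype.card σ : ℝ) with hc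
    set r : ℝ := q / c with hr
    have hrpos : 0 < r := div_pos hqpos hcard
    have hlog2 : (0:ℝ) < Real.log 2 := Real.log_pos one_lt_two
    have key : ∑ s, f s * Real.logb 2 (r / f s) ≤ 0 := by
      have step : ∀ s : σ, f s * Real.logb 2 (r / f s) ≤ (r - f s) / Real.log 2 := by
        intro s
        rcases eq_or_lt_of_le (hf s) with h0 | hpos
        · rw [← h0]
          simp only [zero_mul, sub_zero]
          exact div_nonneg hrpos.le hlog2.le
        · have hx : 0 < r / f s := div_pos hrpos hpos
          have hlog : Real.log (r / f s) ≤ r / f s - 1 := Real.log_le_sub_one_of_pos hx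
          rw [Real.logb]
          rw [div_eq_mul_inv, ← mul_assoc]
          rw [div_eq_mul_inv (r - f s)]
          refine mul_le_mul_of_nonneg_right ?_ (inv_nonneg.mpr hlog2.le)
          calc f s * Real.log (r / f s) ≤ f s * (r / f s - 1) :=
                mul_le_mul_of_nonneg_left hlog hpos.le
            _ = r - f s := by field_simp
        
      calc ∑ s, f s * Real.logb 2 (r / f s) ≤ ∑ s : σ, (r - f s) / Real.log 2 :=
            Finset.sum_le_sum fun s _ => step s
        _ = (c * r - q) / Real.log 2 := by
            rw [← Finset.sum_div, Finset.sum_sub_distrib, Finset.sum_const, Finset.card_univ]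
            simp [hc, nsmul_eq_mul, ← hq]
        _ = 0 := by
            rw [hr]
            field_simp
            ring
    have expand : ∑ s, f s * Real.logb 2 (r / f s)
        = q * Real.logb 2 r - ∑ s, f s * Real.logb 2 (f s) := by
      have : ∀ s : σ, f s * Real.logb 2 (r / f s)
          = f s * Real.logb 2 r - f s * Real.logb 2 (f s) := by
        intro s
        rcases eq_or_lt_of_le (hf s) with h0 | hpos
        · rw [← h0]; ring
        · rw [Real.logb_div hrpos.ne' hpos.ne']; ring
      rw [Finset.sum_congr rfl fun s _ => this s, Finset.sum_sub_distrib, ← Finset.sum_mul]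
    have hlogr : Real.logb 2 r = Real.logb 2 q - Real.logb 2 c :=
      Real.logb_div hqpos.ne' hcard.ne'
    rw [expand, hlogr] at key
    have : ∑ s, -(f s * Real.logb 2 (f s)) = -∑ s, f s * Real.logb 2 (f s) := by
      rw [Finset.sum_neg_distrib]
    rw [this]
    nlinarith [key]

/-- (Generalized Theorem 7.11/Corollary 7.12, classical side
information.) Fix `n ≥ 50`, `N = 2^n`, `m, k ≥ 1` with `k ≤ 2^(n/2)` and
`m, n ≤ 10^6`, and `δ ∈ [0,1]`. Let `P i` be PMFs on `Fin N` with
`max_z P i z ≤ 4 ln N / N`, let `(Zs (j,i))` be mutually independent samples with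
`Zs (j,i) ∼ P i`, and let `Zvec` be any random output tuple on the same space. If
`(1/m) ∑ i, Pr[Zvec i ∈ {Zs (j,i) : j}] ≥ 1 - δ`, then the Shannon entropy (base 2)
of `Zvec` is at least `m (n (1-δ) - log₂ n - log₂ k - 3)`. -/
theorem stmt7 {Ω : Type*} [MeasurableSpace Ω] (μ : Measure Ω) [IsProbabilityMeasure μ]
    (n N m k : ℕ) (hn : 50 ≤ n) (hN : N = 2 ^ n)
    (hm : 1 ≤ m) (hk : 1 ≤ k) (hk2 : (k : ℝ) ≤ 2 ^ ((n : ℝ) / 2))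
    (hm6 : m ≤ 10 ^ 6) (hn6 : n ≤ 10 ^ 6)
    (δ : ℝ) (hδ0 : 0 ≤ δ) (hδ1 : δ ≤ 1)
    (P : Fin m → PMF (Fin N))
    (hP : ∀ i z, ((P i) z).toReal ≤ 4 * Real.log N / N)
    (Zs : Fin k × Fin m → Ω → Fin N)
    (hZsmeas : ∀ ji, Measurable (Zs ji))
    (hindep : iIndepFun Zs μ)
    (hlaw : ∀ ji : Fin k × Fin m, Measure.map (Zs ji) μ = (P ji.2).toMeasure)
    (Zvec : Ω → Fin m → Fin N)
    (hZvecmeas : Measurable Zvec)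
    (hhit : (1 / (m : ℝ)) * ∑ i : Fin m,
        (μ {ω | ∃ j : Fin k, Zs (j, i) ω = Zvec ω i}).toReal ≥ 1 - δ) :
    -∑ v : Fin m → Fin N,
        (μ {ω | Zvec ω = v}).toReal * Real.logb 2 (μ {ω | Zvec ω = v}).toReal
      ≥ m * ((n : ℝ) * (1 - δ) - Real.logb 2 n - Real.logb 2 k - 3) := by
  classical
  -- numeric setup
  have hn0 : 0 < n := by omega
  have hm0R : (0:ℝ) < m := by exact_mod_cast hm
  have hNcast : (N:ℝ) = (2:ℝ) ^ n := by rw [hN]; push_cast; ring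
  have hN1 : (1:ℝ) < N := by
    rw [hNcast]; exact one_lt_pow₀ (by norm_num) (by omega)
  have hNpos : (0:ℝ) < N := lt_trans one_pos hN1
  have hlogN : 0 < Real.log N := Real.log_pos hN1
  have hkR : (1:ℝ) ≤ k := by exact_mod_cast hk
  have hnR : (1:ℝ) ≤ n := by exact_mod_cast hn0
  set ε : ℝ := k * (4 * Real.log N / N) with hεdef
  have hεpos : 0 < ε := by
    apply mul_pos (lt_of_lt_of_le one_pos hkR)
    positivity
  -- events
  set Hit : Fin m → Set Ω := fun i => {ω | ∃ j : Fin k, Zs (j, i) ω = Zvec ω i} with hHitDef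
  set D : Finset (Fin m) → Set Ω := fun s => {ω | ∀ i, i ∈ s ↔ ω ∈ Hit i} with hDdef
  set E : (Fin m → Fin N) → Finset (Fin m) → Set Ω :=
    fun v s => {ω | Zvec ω = v} ∩ D s with hEdef
  -- measurability
  have hHitm : ∀ i, MeasurableSet (Hit i) := by
    intro i
    have h1 : Hit i = ⋃ j : Fin k, {ω | Zs (j, i) ω = Zvec ω i} := by
      ext ω
      simp only [hHitDef, Set.mem_setOf_eq, Set.mem_iUnion]
    rw [h1]
    exact MeasurableSet.iUnion fun j =>
      measurableSet_eq_fun (hZsmeas _) ((measurable_pi_apply i).comp hZvecmeas)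
  have hVm : ∀ v : Fin m → Fin N, MeasurableSet {ω | Zvec ω = v} :=
    fun v => hZvecmeas (measurableSet_singleton v)
  have hDm : ∀ s, MeasurableSet (D s) := by
    intro s
    have hDeq : D s = ⋂ i, (if i ∈ s then Hit i else (Hit i)ᶜ) := by
      ext ω
      simp only [hDdef, Set.mem_setOf_eq, Set.mem_iInter]
      constructor
      · intro h i
        by_cases hi : i ∈ s
        · rw [if_pos hi]; exact (h i).mp hi
        · rw [if_neg hi]; exact fun hH => hi ((h i).mpr hH)
      · intro h i
        constructor
        · intro hi; have := h i; rwa [if_pos hi] at this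
        · intro hH; by_contra hi; have := h i; rw [if_neg hi] at this; exact this hH
    rw [hDeq]
    refine MeasurableSet.iInter fun i => ?_
    by_cases hi : i ∈ s
    · rw [if_pos hi]; exact hHitm i
    · rw [if_neg hi]; exact (hHitm i).compl
  have hEm : ∀ v s, MeasurableSet (E v s) := fun v s => (hVm v).inter (hDm s)
  -- unique covers
  have hcovD : ∀ ω, ∃! s : Finset (Fin m), ω ∈ D s := by
    intro ω
    refine ⟨Finset.univ.filter (fun i => ω ∈ Hit i), ?_, ?_⟩
    · simp only [hDdef, Set.mem_setOf_eq]
      intro i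
      simp
    · intro s hs
      simp only [hDdef, Set.mem_setOf_eq] at hs
      ext i
      rw [Finset.mem_filter]
      exact ⟨fun hi => ⟨Finset.mem_univ i, (hs i).mp hi⟩, fun h => (hs i).mpr h.2⟩
  have hcovE : ∀ ω, ∃! t : (Fin m → Fin N) × Finset (Fin m), ω ∈ E t.1 t.2 := by
    intro ω
    obtain ⟨s₀, hs₀, huniq⟩ := hcovD ω
    refine ⟨(Zvec ω, s₀), ⟨rfl, hs₀⟩, ?_⟩
    rintro ⟨v, s⟩ ⟨h1, h2⟩
    have hv : Zvec ω = v := h1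
    have hseq : s = s₀ := huniq s h2
    simp [Prod.ext_iff, hv.symm, hseq]
  -- ENNReal partitions
  have hq : ∀ v, μ {ω | Zvec ω = v} = ∑ s : Finset (Fin m), μ (E v s) := by
    intro v
    exact auxPart μ {ω | Zvec ω = v} D (fun s => hEm v s) hcovD
  have htot : ∑ v : Fin m → Fin N, μ {ω | Zvec ω = v} = 1 := by
    have hcovV : ∀ ω, ∃! v : Fin m → Fin N, ω ∈ {ω' | Zvec ω' = v} := by
      intro ω; exact ⟨Zvec ω, rfl, fun v hv => hv.symm⟩
    have h1 := auxPart μ Set.univ (fun v : Fin m → Fin N => {ω | Zvec ω = v})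
      (fun v => MeasurableSet.univ.inter (hVm v)) hcovV
    rw [measure_univ] at h1
    simp only [Set.univ_inter] at h1
    exact h1.symm
  have hHitp : ∀ i, μ (Hit i) = ∑ v : Fin m → Fin N, ∑ s : Finset (Fin m),
      (if i ∈ s then μ (E v s) else 0) := by
    intro i
    have h1 := auxPart μ (Hit i) (fun t : (Fin m → Fin N) × Finset (Fin m) => E t.1 t.2)
      (fun t => (hHitm i).inter (hEm t.1 t.2)) hcovE
    rw [h1, Fintype.sum_prod_type]
    refine Finset.sum_congr rfl fun v _ => Finset.sum_congr rfl fun s _ => ?_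
    by_cases hi : i ∈ s
    · rw [if_pos hi]
      congr 1
      apply Set.inter_eq_right.mpr
      intro ω hω
      have h2 : ω ∈ D s := hω.2
      simp only [hDdef, Set.mem_setOf_eq] at h2
      exact (h2 i).mp hi
    · rw [if_neg hi]
      have : Hit i ∩ E v s = ∅ := by
        ext ω
        simp only [Set.mem_inter_iff, Set.mem_empty_iff_false, iff_false, not_and]
        intro hH hE
        have h2 : ω ∈ D s := hE.2
        simp only [hDdef, Set.mem_setOf_eq] at h2
        exact hi ((h2 i).mpr hH)
      rw [this, measure_empty]
  -- real versions
  have hqsum : ∀ v, (μ {ω | Zvec ω = v}).toReal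
      = ∑ s : Finset (Fin m), (μ (E v s)).toReal := by
    intro v
    rw [hq v, ENNReal.toReal_sum (fun s _ => measure_ne_top μ _)]
  have hsum1 : ∑ v : Fin m → Fin N, (μ {ω | Zvec ω = v}).toReal = 1 := by
    rw [← ENNReal.toReal_sum (fun v _ => measure_ne_top μ _), htot, ENNReal.toReal_one]
  have hHitr : ∀ i, (μ (Hit i)).toReal = ∑ v : Fin m → Fin N, ∑ s : Finset (Fin m),
      (if i ∈ s then (μ (E v s)).toReal else 0) := by
    intro i
    rw [hHitp i, ENNReal.toReal_sum (fun v _ => ?_)]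
    · refine Finset.sum_congr rfl fun v _ => ?_
      rw [ENNReal.toReal_sum (fun s _ => ?_)]
      · refine Finset.sum_congr rfl fun s _ => ?_
        split_ifs
        · rfl
        · exact ENNReal.toReal_zero
      · split_ifs
        · exact measure_ne_top μ _
        · exact ENNReal.zero_ne_top
    · refine ENNReal.sum_ne_top.mpr fun s _ => ?_
      split_ifs
      · exact measure_ne_top μ _
      · exact ENNReal.zero_ne_top
  -- hit sum lower bound
  have hhits : (m:ℝ) * (1 - δ) ≤ ∑ i : Fin m, (μ (Hit i)).toReal := by
    have hS : ∑ i : Fin m, (μ (Hit i)).toReal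
        = ∑ i : Fin m, (μ {ω | ∃ j : Fin k, Zs (j, i) ω = Zvec ω i}).toReal := rfl
    rw [hS]
    have h2 := mul_le_mul_of_nonneg_left hhit hm0R.le
    rw [← mul_assoc, mul_one_div_cancel hm0R.ne', one_mul] at h2
    exact h2
  -- upper bound on cell measures
  have hup : ∀ v s, (μ (E v s)).toReal ≤ ε ^ s.card := by
    intro v s
    have h1 : μ (E v s) ≤ μ (⋂ i ∈ s, ⋃ j : Fin k, Zs (j, i) ⁻¹' {v i}) := by
      apply measure_mono
      intro ω hω
      have hv : Zvec ω = v := hω.1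
      have hD2 : ω ∈ D s := hω.2
      simp only [hDdef, Set.mem_setOf_eq] at hD2
      refine Set.mem_iInter₂.mpr fun i hi => ?_
      obtain ⟨j, hj⟩ := (hD2 i).mp hi
      refine Set.mem_iUnion.mpr ⟨j, ?_⟩
      simp only [Set.mem_preimage, Set.mem_singleton_iff]
      rw [hj, hv]
    have h2 := auxA μ Zs hindep v s
    have h3 : ∀ i ∈ s, ∑ j : Fin k, μ (Zs (j, i) ⁻¹' {v i}) ≤ ENNReal.ofReal ε := by
      intro i _
      have hsingle : ∀ j : Fin k, μ (Zs (j, i) ⁻¹' {v i}) = P i (v i) := by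
        intro j
        have hmap := Measure.map_apply (μ := μ) (hZsmeas (j, i)) (measurableSet_singleton (v i))
        rw [hlaw (j, i)] at hmap
        rw [← hmap, PMF.toMeasure_apply_singleton _ _ (measurableSet_singleton _)]
      rw [Finset.sum_congr rfl (fun j _ => hsingle j), Finset.sum_const, Finset.card_univ,
        Fintype.card_fin]
      have hPb : P i (v i) ≤ ENNReal.ofReal (4 * Real.log N / N) := by
        rw [← ENNReal.ofReal_toReal (PMF.apply_ne_top (P i) (v i))]
        exact ENNReal.ofReal_le_ofReal (hP i (v i))
      calc (k : ℕ) • P i (v i) = (k : ENNReal) * P i (v i) := by rw [nsmul_eq_mul]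
        _ ≤ (k : ENNReal) * ENNReal.ofReal (4 * Real.log N / N) := mul_le_mul_right hPb _
        _ = ENNReal.ofReal ε := by
            rw [← ENNReal.ofReal_natCast k, ← ENNReal.ofReal_mul (Nat.cast_nonneg k), hεdef]
    have h4 : μ (E v s) ≤ ENNReal.ofReal ε ^ s.card := by
      refine (h1.trans (h2.trans ?_))
      calc ∏ i ∈ s, ∑ j : Fin k, μ (Zs (j, i) ⁻¹' {v i})
          ≤ ∏ i ∈ s, ENNReal.ofReal ε := Finset.prod_le_prod' h3
        _ = ENNReal.ofReal ε ^ s.card := Finset.prod_const _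
    calc (μ (E v s)).toReal ≤ (ENNReal.ofReal ε ^ s.card).toReal :=
          ENNReal.toReal_mono (ENNReal.pow_ne_top ENNReal.ofReal_ne_top) h4
      _ = ε ^ s.card := by rw [ENNReal.toReal_pow, ENNReal.toReal_ofReal hεpos.le]
  -- logarithm facts
  have hlogb22 : Real.logb 2 2 = 1 := by
    rw [Real.logb, div_self (ne_of_gt (Real.log_pos one_lt_two))]
  have hlogbN : Real.logb 2 (N:ℝ) = n := by
    rw [hNcast, Real.logb_pow, hlogb22, mul_one]
  have hlogbk : Real.logb 2 (k:ℝ) ≤ (n:ℝ)/2 := by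
    have h1 : Real.logb 2 (k:ℝ) ≤ Real.logb 2 ((2:ℝ) ^ ((n:ℝ)/2)) :=
      Real.logb_le_logb_of_le (by norm_num) (lt_of_lt_of_le one_pos hkR) hk2
    rwa [Real.logb_rpow (by norm_num) (by norm_num)] at h1
  have hlogn20 : Real.logb 2 (n:ℝ) ≤ 20 := by
    have h1 : (n:ℝ) ≤ (2:ℝ)^(20:ℕ) := by
      calc (n:ℝ) ≤ ((10^6 : ℕ) : ℝ) := by exact_mod_cast hn6
        _ ≤ (2:ℝ)^(20:ℕ) := by norm_num
    have h2 : Real.logb 2 (n:ℝ) ≤ Real.logb 2 ((2:ℝ)^(20:ℕ)) :=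
      Real.logb_le_logb_of_le (by norm_num) (lt_of_lt_of_le one_pos hnR) h1
    rw [Real.logb_pow, hlogb22, mul_one] at h2
    exact_mod_cast h2
  have hlogn0 : 0 ≤ Real.logb 2 (n:ℝ) := Real.logb_nonneg (by norm_num) hnR
  have hlogk0 : 0 ≤ Real.logb 2 (k:ℝ) := Real.logb_nonneg (by norm_num) hkR
  have hlogN_le : Real.log (N:ℝ) ≤ (n:ℝ) := by
    rw [hNcast, Real.log_pow]
    have hl2 : Real.log 2 ≤ 1 := by
      have := Real.log_le_sub_one_of_pos (by norm_num : (0:ℝ) < 2)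
      linarith
    calc (n:ℝ) * Real.log 2 ≤ (n:ℝ) * 1 :=
          mul_le_mul_of_nonneg_left hl2 (Nat.cast_nonneg n)
      _ = n := mul_one _
  have hεle : ε ≤ (k:ℝ) * (4 * n) / N := by
    have hrw : ε = (k:ℝ) * (4 * Real.log N) / N := by rw [hεdef]; ring
    rw [hrw]
    gcongr
  have hlogε : Real.logb 2 ε ≤ 2 + Real.logb 2 k + Real.logb 2 n - n := by
    have h1 : Real.logb 2 ε ≤ Real.logb 2 ((k:ℝ) * (4 * n) / N) :=
      Real.logb_le_logb_of_le (by norm_num) hεpos hεle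
    have hn0R : (n:ℝ) ≠ 0 := by positivity
    have hk0R : (k:ℝ) ≠ 0 := by positivity
    have hlogexp : Real.logb 2 ((k:ℝ) * (4 * n) / N)
        = Real.logb 2 k + (Real.logb 2 4 + Real.logb 2 n) - Real.logb 2 N := by
      rw [Real.logb_div (by positivity) hNpos.ne', Real.logb_mul hk0R (by positivity),
        Real.logb_mul (by norm_num) hn0R]
    have hlog4 : Real.logb 2 (4:ℝ) = 2 := by
      have h4 : (4:ℝ) = 2^(2:ℕ) := by norm_num
      rw [h4, Real.logb_pow, hlogb22]; norm_num
    rw [hlogexp, hlog4, hlogbN] at h1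
    linarith
  set A : ℝ := Real.logb 2 (n:ℝ) with hA
  set B : ℝ := Real.logb 2 (k:ℝ) with hB
  have hn50R : (50:ℝ) ≤ n := by exact_mod_cast hn
  have hL0 : (0:ℝ) ≤ (n:ℝ) - 2 - A - B := by
    linarith [hlogn20, hlogbk]
  have hnegLogε : (n:ℝ) - 2 - A - B ≤ -Real.logb 2 ε := by linarith [hlogε]
  -- per-term entropy lower bound
  have hterm : ∀ v s, (μ (E v s)).toReal * ((s.card : ℝ) * ((n:ℝ) - 2 - A - B))
      ≤ -((μ (E v s)).toReal * Real.logb 2 ((μ (E v s)).toReal)) := by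
    intro v s
    have hx0 : 0 ≤ (μ (E v s)).toReal := ENNReal.toReal_nonneg
    rcases eq_or_lt_of_le hx0 with h0 | hxpos
    · rw [← h0]; simp
    · have hxε : (μ (E v s)).toReal ≤ ε ^ s.card := hup v s
      have hlx : Real.logb 2 ((μ (E v s)).toReal) ≤ (s.card : ℝ) * Real.logb 2 ε := by
        have := Real.logb_le_logb_of_le (by norm_num : (1:ℝ) < 2) hxpos hxε
        rwa [Real.logb_pow] at this
      have h2 : (μ (E v s)).toReal * Real.logb 2 ((μ (E v s)).toReal)
          ≤ (μ (E v s)).toReal * ((s.card : ℝ) * Real.logb 2 ε) :=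
        mul_le_mul_of_nonneg_left hlx hx0
      have h3 : (μ (E v s)).toReal * ((s.card : ℝ) * ((n:ℝ) - 2 - A - B))
          ≤ (μ (E v s)).toReal * ((s.card : ℝ) * (-Real.logb 2 ε)) := by
        apply mul_le_mul_of_nonneg_left _ hx0
        exact mul_le_mul_of_nonneg_left hnegLogε (Nat.cast_nonneg _)
      have h4 : (μ (E v s)).toReal * ((s.card : ℝ) * (-Real.logb 2 ε))
          = -((μ (E v s)).toReal * ((s.card : ℝ) * Real.logb 2 ε)) := by ring
      linarith
  -- swap sums for hit counting
  have hswap : ∑ i : Fin m, (μ (Hit i)).toReal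
      = ∑ v : Fin m → Fin N, ∑ s : Finset (Fin m), (μ (E v s)).toReal * (s.card : ℝ) := by
    rw [Finset.sum_congr rfl (fun i _ => hHitr i)]
    rw [Finset.sum_comm]
    refine Finset.sum_congr rfl fun v _ => ?_
    rw [Finset.sum_comm]
    refine Finset.sum_congr rfl fun s _ => ?_
    rw [Finset.sum_ite_mem, Finset.univ_inter, Finset.sum_const, nsmul_eq_mul, mul_comm]
  -- joint entropy lower bound
  have hjoint_low : ((n:ℝ) - 2 - A - B) * ((m:ℝ) * (1 - δ))
      ≤ ∑ v : Fin m → Fin N, ∑ s : Finset (Fin m),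
        -((μ (E v s)).toReal * Real.logb 2 ((μ (E v s)).toReal)) := by
    have hstep1 : ((n:ℝ) - 2 - A - B) * ((m:ℝ) * (1 - δ))
        ≤ ((n:ℝ) - 2 - A - B) * ∑ i : Fin m, (μ (Hit i)).toReal :=
      mul_le_mul_of_nonneg_left hhits hL0
    have hstep2 : ((n:ℝ) - 2 - A - B) * ∑ i : Fin m, (μ (Hit i)).toReal
        = ∑ v : Fin m → Fin N, ∑ s : Finset (Fin m),
          (μ (E v s)).toReal * ((s.card : ℝ) * ((n:ℝ) - 2 - A - B)) := by
      rw [hswap, Finset.mul_sum]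
      refine Finset.sum_congr rfl fun v _ => ?_
      rw [Finset.mul_sum]
      exact Finset.sum_congr rfl fun s _ => by ring
    calc ((n:ℝ) - 2 - A - B) * ((m:ℝ) * (1 - δ))
        ≤ ((n:ℝ) - 2 - A - B) * ∑ i : Fin m, (μ (Hit i)).toReal := hstep1
      _ = _ := hstep2
      _ ≤ _ := Finset.sum_le_sum fun v _ => Finset.sum_le_sum fun s _ => hterm v s
  -- entropy chain rule bound
  have hchain : ∑ v : Fin m → Fin N, ∑ s : Finset (Fin m),
        -((μ (E v s)).toReal * Real.logb 2 ((μ (E v s)).toReal))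
      ≤ (∑ v : Fin m → Fin N,
          -((μ {ω | Zvec ω = v}).toReal * Real.logb 2 ((μ {ω | Zvec ω = v}).toReal))) + m := by
    have hv : ∀ v : Fin m → Fin N, ∑ s : Finset (Fin m),
        -((μ (E v s)).toReal * Real.logb 2 ((μ (E v s)).toReal))
        ≤ -((μ {ω | Zvec ω = v}).toReal * Real.logb 2 ((μ {ω | Zvec ω = v}).toReal))
          + (μ {ω | Zvec ω = v}).toReal * m := by
      intro v
      have hB2 := auxB (fun s => (μ (E v s)).toReal) (fun s => ENNReal.toReal_nonneg)
      rw [← hqsum v] at hB2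
      have hcard : Real.logb 2 ((Fintype.card (Finset (Fin m))):ℝ) = m := by
        rw [Fintype.card_finset, Fintype.card_fin]
        push_cast
        rw [Real.logb_pow, hlogb22, mul_one]
      rw [hcard] at hB2
      exact hB2
    calc ∑ v : Fin m → Fin N, ∑ s : Finset (Fin m),
          -((μ (E v s)).toReal * Real.logb 2 ((μ (E v s)).toReal))
        ≤ ∑ v : Fin m → Fin N,
            (-((μ {ω | Zvec ω = v}).toReal * Real.logb 2 ((μ {ω | Zvec ω = v}).toReal))
            + (μ {ω | Zvec ω = v}).toReal * m) := Finset.sum_le_sum fun v _ => hv v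
      _ = (∑ v : Fin m → Fin N,
            -((μ {ω | Zvec ω = v}).toReal * Real.logb 2 ((μ {ω | Zvec ω = v}).toReal)))
          + (∑ v : Fin m → Fin N, (μ {ω | Zvec ω = v}).toReal) * m := by
          rw [Finset.sum_add_distrib, Finset.sum_mul]
      _ = _ := by rw [hsum1, one_mul]
  -- final combination
  have hgoal_eq : -∑ v : Fin m → Fin N,
      (μ {ω | Zvec ω = v}).toReal * Real.logb 2 (μ {ω | Zvec ω = v}).toReal
      = ∑ v : Fin m → Fin N,
        -((μ {ω | Zvec ω = v}).toReal * Real.logb 2 ((μ {ω | Zvec ω = v}).toReal)) := by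
    rw [Finset.sum_neg_distrib]
  rw [ge_iff_le, hgoal_eq]
  have hfin : 0 ≤ (m:ℝ) * (δ * (2 + A + B)) := by
    apply mul_nonneg hm0R.le
    apply mul_nonneg hδ0
    linarith
  nlinarith [hjoint_low, hchain, hfin]
end

section
/- Let N ≥ 1, K ≥ 1, and let f be drawn uniformly at random from the finite set Φ(N, K) of all functions f : Fin N → ℕ with ∑_z f(z) = K. Then Pr[∃ z, f(z) ≥ 2] ≤ K(K − 1)/N; equivalently, Pr[max_z f(z) ≤ 1] ≥ 1 − K(K−1)/N. -/
open Finset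


lemma cardTot (N K : ℕ) : (Finset.Nat.antidiagonalTuple N K).card = (N + K - 1).choose K := by
  rw [← Fintype.card_coe]
  have e1 : {x // x ∈ Finset.Nat.antidiagonalTuple N K} ≃ {f : Fin N → ℕ // ∑ z, f z = K} :=
    Equiv.subtypeEquivRight fun f => Finset.Nat.mem_antidiagonalTuple
  have e2 : {f : Fin N → ℕ // ∑ z, f z = K} ≃ Sym (Fin N) K := by
    refine Equiv.subtypeEquiv
      ((Finsupp.equivFunOnFinite (α := Fin N) (M := ℕ)).symm.trans
        Multiset.toFinsupp.symm.toEquiv) fun f => ?_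
    have h : Multiset.card (Multiset.toFinsupp.symm (Finsupp.equivFunOnFinite.symm f)) = ∑ z, f z := by
      rw [show (Multiset.toFinsupp.symm (Finsupp.equivFunOnFinite.symm f) : Multiset (Fin N))
          = Finsupp.toMultiset (Finsupp.equivFunOnFinite.symm f) from rfl,
        Finsupp.card_toMultiset, Finsupp.sum_fintype]
      · rfl
      · simp
    exact ⟨fun h' => h.trans h', fun h' => h.symm.trans h'⟩
  rw [Fintype.card_congr (e1.trans e2), Sym.card_sym_eq_choose]
  simp

lemma cardRep (N K : ℕ) (hN : 1 ≤ N) (hK : 2 ≤ K) :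
    ((Finset.Nat.antidiagonalTuple N K).filter (fun f : Fin N → ℕ => ∃ z, 2 ≤ f z)).card
      ≤ N * (N + K - 3).choose (K - 2) := by
  classical
  have h : ((Finset.Nat.antidiagonalTuple N K).filter (fun f : Fin N → ℕ => ∃ z, 2 ≤ f z)).card
      ≤ ((univ : Finset (Fin N)) ×ˢ Finset.Nat.antidiagonalTuple N (K - 2)).card := by
    apply Finset.card_le_card_of_injOn
      (fun f => if h : ∃ z, 2 ≤ f z
        then (h.choose, Function.update f h.choose (f h.choose - 2))
        else (⟨0, hN⟩, f))
    · intro f hf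
      simp only [mem_coe, mem_filter, Finset.Nat.mem_antidiagonalTuple] at hf
      obtain ⟨hsum, hex⟩ := hf
      beta_reduce
      rw [dif_pos hex]
      simp only [mem_coe, Finset.mem_product, Finset.mem_univ, true_and, Finset.Nat.mem_antidiagonalTuple]
      have hz := hex.choose_spec
      set z := hex.choose
      have hzK : f z ≤ K := hsum ▸ Finset.single_le_sum (fun i _ => Nat.zero_le _) (mem_univ z)
      rw [Finset.sum_update_of_mem (mem_univ z)]
      have : ∑ x ∈ univ \ {z}, f x = K - f z := by
        have := Finset.add_sum_erase univ f (mem_univ z)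
        rw [← Finset.sdiff_singleton_eq_erase] at this
        omega
      omega
    · intro f₁ hf₁ f₂ hf₂ heq
      simp only [coe_filter, Set.mem_setOf_eq, Finset.Nat.mem_antidiagonalTuple] at hf₁ hf₂
      obtain ⟨-, h₁⟩ := hf₁; obtain ⟨-, h₂⟩ := hf₂
      dsimp only at heq
      rw [dif_pos h₁, dif_pos h₂, Prod.mk.injEq] at heq
      obtain ⟨hz, hu⟩ := heq
      have s1 : 2 ≤ f₁ h₁.choose := h₁.choose_spec
      have s2 : 2 ≤ f₂ h₂.choose := h₂.choose_spec
      rw [← hz] at s2 hu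
      funext w
      have hw := congrFun hu w
      rw [Function.update_apply, Function.update_apply] at hw
      split_ifs at hw with h
      · subst h; omega
      · exact hw
  refine h.trans ?_
  rw [Finset.card_product, Finset.card_univ, Fintype.card_fin, cardTot,
    show N + (K - 2) - 1 = N + K - 3 by clear h; omega]

lemma keyId (N K : ℕ) (hN : 1 ≤ N) (hK : 2 ≤ K) :
    K * (K - 1) * (N + K - 1).choose K = (N + K - 1) * (N + K - 2) * (N + K - 3).choose (K - 2) := by
  obtain ⟨k, rfl⟩ : ∃ k, K = k + 2 := ⟨K - 2, by omega⟩
  obtain ⟨M, rfl⟩ : ∃ M, N = M + 1 := ⟨N - 1, by omega⟩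
  have h1 := Nat.add_one_mul_choose_eq (M + k + 1) (k + 1)
  have h2 := Nat.add_one_mul_choose_eq (M + k) k
  have e1 : M + 1 + (k + 2) - 1 = M + k + 2 := by omega
  have e2 : M + 1 + (k + 2) - 2 = M + k + 1 := by omega
  have e3 : M + 1 + (k + 2) - 3 = M + k := by omega
  rw [e1, e2, e3]
  simp only [show k + 2 - 1 = k + 1 from rfl, show k + 2 - 2 = k from rfl]
  nlinarith [h1, h2]

/-- Let `Φ(N, K)` be the (finite) set of frequency vectors
`f : Fin N → ℕ` with `∑ z, f z = K`. For `f` drawn uniformly from `Φ(N, K)`, the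
probability of a repeat (`∃ z, f z ≥ 2`) is at most `K (K-1) / N`; equivalently, the
probability that `max_z f z ≤ 1` is at least `1 - K (K-1) / N`. -/
theorem stmt9 (N K : ℕ) (hN : 1 ≤ N) (hK : 1 ≤ K) :
    (((Finset.Nat.antidiagonalTuple N K).filter
        (fun f : Fin N → ℕ => ∃ z, 2 ≤ f z)).card : ℝ) /
        ((Finset.Nat.antidiagonalTuple N K).card : ℝ)
      ≤ (K : ℝ) * ((K : ℝ) - 1) / N
    ∧ (((Finset.Nat.antidiagonalTuple N K).filter
        (fun f : Fin N → ℕ => ∀ z, f z ≤ 1)).card : ℝ) /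
        ((Finset.Nat.antidiagonalTuple N K).card : ℝ)
      ≥ 1 - (K : ℝ) * ((K : ℝ) - 1) / N := by
  classical
  set A := Finset.Nat.antidiagonalTuple N K with hA
  set R := A.filter (fun f : Fin N → ℕ => ∃ z, 2 ≤ f z) with hR
  have hTpos : 0 < A.card := by
    rw [hA, cardTot]
    exact Nat.choose_pos (by omega)
  -- main counting inequality
  have hmain : N * R.card ≤ K * (K - 1) * A.card := by
    rcases Nat.lt_or_ge K 2 with h2 | h2
    · -- K = 1 : R is empty
      have hK1 : K = 1 := by omega
      have : R = ∅ := by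
        rw [hR, Finset.filter_eq_empty_iff]
        intro f hf
        rw [hA, Finset.Nat.mem_antidiagonalTuple] at hf
        rintro ⟨z, hz⟩
        have : f z ≤ K := hf ▸ Finset.single_le_sum (fun i _ => Nat.zero_le _) (mem_univ z)
        omega
      simp [this]
    · have h1 := cardRep N K hN h2
      have h2' := keyId N K hN h2
      calc N * R.card ≤ N * (N * (N + K - 3).choose (K - 2)) := Nat.mul_le_mul_left _ h1
        _ = N * N * (N + K - 3).choose (K - 2) := by ring
        _ ≤ (N + K - 1) * (N + K - 2) * (N + K - 3).choose (K - 2) :=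
            Nat.mul_le_mul (Nat.mul_le_mul (by clear h1; omega) (by clear h1; omega)) le_rfl
        _ = K * (K - 1) * (N + K - 1).choose K := h2'.symm
        _ = K * (K - 1) * A.card := by rw [hA, cardTot]
  have hTpos' : (0:ℝ) < (A.card : ℝ) := by exact_mod_cast hTpos
  have hNpos : (0:ℝ) < (N : ℝ) := by exact_mod_cast hN
  have hmainR : (R.card : ℝ) * N ≤ (K:ℝ) * ((K:ℝ) - 1) * A.card := by
    have := (Nat.cast_le (α := ℝ)).2 hmain
    push_cast [Nat.cast_sub hK] at this
    linarith
  have part1 : (R.card : ℝ) / A.card ≤ (K:ℝ) * ((K:ℝ) - 1) / N := by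
    rw [div_le_div_iff₀ hTpos' hNpos]
    linarith
  refine ⟨part1, ?_⟩
  have hcomp : A.filter (fun f : Fin N → ℕ => ∀ z, f z ≤ 1) = A \ R := by
    rw [hR, ← Finset.filter_not]
    apply Finset.filter_congr
    intro f _
    constructor
    · intro h hc; obtain ⟨z, hz⟩ := hc; have := h z; omega
    · intro h z; by_contra hc; exact h ⟨z, by omega⟩
  have hsub : R.card ≤ A.card := Finset.card_le_card (Finset.filter_subset _ _)
  rw [hcomp, Finset.card_sdiff_of_subset (Finset.filter_subset _ _)]
  rw [ge_iff_le, Nat.cast_sub hsub, sub_div, div_self (ne_of_gt hTpos')]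
  have := part1
  linarith
end

section
/- Let N ≥ 2, let k be an integer with 1 ≤ k < N, let u ∈ [0,1], and let p be a probability mass function on Fin N. Define two distributions on Fin N: q_A is the output of the process 'draw z_1, …, z_k i.i.d. from p; with probability u output z_I for I uniform on [k]; otherwise output a uniformly random element of Fin N ∖ {z_1,…,z_k}'; and q_B is the output of the process 'with probability u output one draw from p; otherwise output a uniformly random element of Fin N'. Then ∑_{z∈Fin N} |q_A(z) − q_B(z)| ≤ (1 − u)·[(1/(1 − k/N) − 1) + k/N] ≤ 2k/(N·(1 − k/N)). -/
open Finset

lemma stmt10_marg {k N : ℕ} (p f : Fin N → ℝ) (hp1 : ∑ z : Fin N, p z = 1) (i₀ : Fin k) :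
    ∑ t : Fin k → Fin N, (∏ i, p (t i)) * f (t i₀) = ∑ x : Fin N, p x * f x := by
  have key : ∑ t : Fin k → Fin N, ∏ i, (if i = i₀ then p (t i) * f (t i) else p (t i))
      = ∏ i : Fin k, ∑ x : Fin N, (if i = i₀ then p x * f x else p x) :=
    (Fintype.prod_sum (κ := fun _ : Fin k => Fin N)
      (fun i x => if i = i₀ then p x * f x else p x)).symm
  calc ∑ t : Fin k → Fin N, (∏ i, p (t i)) * f (t i₀)
      = ∑ t : Fin k → Fin N, ∏ i, (if i = i₀ then p (t i) * f (t i) else p (t i)) := by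
        refine Finset.sum_congr rfl fun t _ => ?_
        have hR : (∏ i : Fin k, if i = i₀ then p (t i) * f (t i) else p (t i))
            = (p (t i₀) * f (t i₀)) * ∏ i ∈ Finset.univ.erase i₀, p (t i) := by
          rw [← Finset.mul_prod_erase Finset.univ _ (Finset.mem_univ i₀), if_pos rfl,
            Finset.prod_congr rfl (fun i hi => if_neg (Finset.mem_erase.1 hi).1)]
        have hL : (∏ i : Fin k, p (t i)) = p (t i₀) * ∏ i ∈ Finset.univ.erase i₀, p (t i) :=
          (Finset.mul_prod_erase Finset.univ _ (Finset.mem_univ i₀)).symm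
        rw [hL, hR]; ring
    _ = ∏ i : Fin k, ∑ x : Fin N, (if i = i₀ then p x * f x else p x) := key
    _ = ∑ x : Fin N, p x * f x := by
        have h : ∀ i : Fin k, (∑ x : Fin N, if i = i₀ then p x * f x else p x)
            = if i = i₀ then ∑ x : Fin N, p x * f x else 1 := by
          intro i; by_cases h : i = i₀ <;> simp [h, hp1]
        rw [Finset.prod_congr rfl fun i _ => h i]
        simp

/-- (TVD between sampling processes A and B.) Let `p` be a PMF on
`Fin N` (`N ≥ 2`), `1 ≤ k < N`, `u ∈ [0,1]`. Process A: draw `z 1, …, z k` i.i.d.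
from `p`; with probability `u` output a uniformly random one of them, otherwise output
a uniform element of the complement of `{z 1, …, z k}`. Process B: with probability
`u` output one draw from `p`, otherwise output a uniform element of `Fin N`. Then the
L1 distance between the two output distributions is at most
`(1-u) ((1/(1-k/N) - 1) + k/N) ≤ 2k/(N (1-k/N))`. -/
theorem stmt10 (N k : ℕ) (hN : 2 ≤ N) (hk1 : 1 ≤ k) (hkN : k < N)
    (u : ℝ) (hu0 : 0 ≤ u) (hu1 : u ≤ 1)
    (p : Fin N → ℝ) (hp0 : ∀ z, 0 ≤ p z) (hp1 : ∑ z : Fin N, p z = 1)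
    (qA qB : Fin N → ℝ)
    (hqA : ∀ z : Fin N, qA z =
      ∑ t : Fin k → Fin N, (∏ i : Fin k, p (t i)) *
        (u * ((Finset.univ.filter (fun i : Fin k => t i = z)).card : ℝ) / k
          + (1 - u) * (if ∃ i : Fin k, t i = z then 0
              else 1 / ((N : ℝ) - (Finset.univ.image t).card))))
    (hqB : ∀ z : Fin N, qB z = u * p z + (1 - u) / N) :
    ∑ z : Fin N, |qA z - qB z|
        ≤ (1 - u) * ((1 / (1 - (k : ℝ) / N) - 1) + (k : ℝ) / N)
    ∧ (1 - u) * ((1 / (1 - (k : ℝ) / N) - 1) + (k : ℝ) / N)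
        ≤ 2 * k / ((N : ℝ) * (1 - (k : ℝ) / N)) := by
  have hN0 : (0:ℝ) < N := by positivity
  have hkNR : (k:ℝ) < N := by exact_mod_cast hkN
  have hk0R : (0:ℝ) < k := by exact_mod_cast hk1
  have hNk : (0:ℝ) < (N:ℝ) - k := by linarith
  set A : Fin N → ℝ := fun z => ∑ t : Fin k → Fin N, (∏ i, p (t i)) *
      (if ∃ i : Fin k, t i = z then 0 else 1 / ((N:ℝ) - (Finset.univ.image t).card)) with hA
  set S : Fin N → ℝ := fun z => ∑ t : Fin k → Fin N, (∏ i, p (t i)) *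
      (if ∃ i : Fin k, t i = z then 1 else 0) with hS
  have prodp : ∀ t : Fin k → Fin N, 0 ≤ ∏ i, p (t i) :=
    fun t => Finset.prod_nonneg fun i _ => hp0 _
  have htot : ∑ t : Fin k → Fin N, ∏ i, p (t i) = 1 := by
    rw [← Fintype.sum_pow p k, hp1, one_pow]
  have himg : ∀ t : Fin k → Fin N, ((Finset.univ.image t).card : ℝ) ≤ k := by
    intro t
    have h := Finset.card_image_le (s := (Finset.univ : Finset (Fin k))) (f := t)
    rw [Finset.card_univ, Fintype.card_fin] at h
    exact_mod_cast h
  have himgpos : ∀ t : Fin k → Fin N, (0:ℝ) < (N:ℝ) - (Finset.univ.image t).card := by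
    intro t; have := himg t; linarith
  -- the counting identity
  have hcard : ∀ z : Fin N, ∑ t : Fin k → Fin N, (∏ i, p (t i)) *
      ((Finset.univ.filter (fun i : Fin k => t i = z)).card : ℝ) = k * p z := by
    intro z
    have hc : ∀ t : Fin k → Fin N,
        ((Finset.univ.filter (fun i : Fin k => t i = z)).card : ℝ)
        = ∑ i : Fin k, (if t i = z then (1:ℝ) else 0) := by
      intro t; rw [Finset.card_filter]; push_cast; rfl
    simp_rw [hc, Finset.mul_sum]
    rw [Finset.sum_comm]
    have hm : ∀ i₀ : Fin k, ∑ t : Fin k → Fin N,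
        (∏ i, p (t i)) * (if t i₀ = z then (1:ℝ) else 0) = p z := by
      intro i₀
      rw [stmt10_marg p (fun x => if x = z then (1:ℝ) else 0) hp1 i₀]
      simp
    rw [Finset.sum_congr rfl fun i _ => hm i]
    simp [mul_comm]
  -- S bounds
  have hS0 : ∀ z, 0 ≤ S z := by
    intro z
    refine Finset.sum_nonneg fun t _ => mul_nonneg (prodp t) ?_
    split <;> norm_num
  have hSk : ∀ z, S z ≤ k * p z := by
    intro z
    rw [← hcard z]
    refine Finset.sum_le_sum fun t _ => mul_le_mul_of_nonneg_left ?_ (prodp t)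
    split
    · rename_i h
      obtain ⟨i, hi⟩ := h
      have hmem : i ∈ Finset.univ.filter (fun i : Fin k => t i = z) := by simp [hi]
      have hpos := Finset.card_pos.2 ⟨i, hmem⟩
      exact_mod_cast hpos
    · positivity
  -- A upper bound
  have hAub : ∀ z, A z ≤ 1 / ((N:ℝ) - k) := by
    intro z
    calc A z ≤ ∑ t : Fin k → Fin N, (∏ i, p (t i)) * (1 / ((N:ℝ) - k)) := by
          refine Finset.sum_le_sum fun t _ => mul_le_mul_of_nonneg_left ?_ (prodp t)
          split
          · positivity
          · exact one_div_le_one_div_of_le hNk (by have := himg t; linarith)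
      _ = 1 / ((N:ℝ) - k) := by rw [← Finset.sum_mul, htot, one_mul]
  -- A lower bound
  have hT : ∀ z : Fin N, ∑ t : Fin k → Fin N, (∏ i, p (t i)) *
      (if ∃ i : Fin k, t i = z then (0:ℝ) else 1 / N) = (1 - S z) / N := by
    intro z
    have step : ∀ t : Fin k → Fin N, (∏ i, p (t i)) *
        (if ∃ i : Fin k, t i = z then (0:ℝ) else 1 / N)
        = ((∏ i, p (t i)) - (∏ i, p (t i)) * (if ∃ i : Fin k, t i = z then (1:ℝ) else 0)) / N := by
      intro t; by_cases h : ∃ i : Fin k, t i = z <;> simp [h] <;> ring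
    rw [Finset.sum_congr rfl fun t _ => step t, ← Finset.sum_div, Finset.sum_sub_distrib, htot]
  have hAlb : ∀ z, (1 - S z) / N ≤ A z := by
    intro z
    rw [← hT z]
    refine Finset.sum_le_sum fun t _ => mul_le_mul_of_nonneg_left ?_ (prodp t)
    by_cases h : ∃ i : Fin k, t i = z
    · simp [h]
    · rw [if_neg h, if_neg h]
      refine one_div_le_one_div_of_le (himgpos t) ?_
      have : (0:ℝ) ≤ ((Finset.univ.image t).card : ℝ) := Nat.cast_nonneg _
      linarith
  -- decomposition of qA
  have hqA' : ∀ z : Fin N, qA z = u * p z + (1 - u) * A z := by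
    intro z
    rw [hqA z]
    have split : ∀ t : Fin k → Fin N, (∏ i : Fin k, p (t i)) *
        (u * ((Finset.univ.filter (fun i : Fin k => t i = z)).card : ℝ) / k
          + (1 - u) * (if ∃ i : Fin k, t i = z then 0
              else 1 / ((N : ℝ) - (Finset.univ.image t).card)))
        = (u / k) * ((∏ i : Fin k, p (t i)) *
            ((Finset.univ.filter (fun i : Fin k => t i = z)).card : ℝ))
          + (1 - u) * ((∏ i : Fin k, p (t i)) *
            (if ∃ i : Fin k, t i = z then 0
              else 1 / ((N : ℝ) - (Finset.univ.image t).card))) := by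
      intro t; ring
    rw [Finset.sum_congr rfl fun t _ => split t, Finset.sum_add_distrib,
      ← Finset.mul_sum, ← Finset.mul_sum, hcard z]
    have hk' : (k:ℝ) ≠ 0 := hk0R.ne'
    have he : u / (k:ℝ) * ((k:ℝ) * p z) = u * p z := by field_simp
    rw [he]
  -- sum of A equals 1
  have hAsum : ∑ z : Fin N, A z = 1 := by
    rw [show ∑ z : Fin N, A z = ∑ z : Fin N, ∑ t : Fin k → Fin N, (∏ i, p (t i)) *
        (if ∃ i : Fin k, t i = z then 0 else 1 / ((N:ℝ) - (Finset.univ.image t).card)) from rfl,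
      Finset.sum_comm]
    have inner : ∀ t : Fin k → Fin N, ∑ z : Fin N, (∏ i, p (t i)) *
        (if ∃ i : Fin k, t i = z then 0 else 1 / ((N:ℝ) - (Finset.univ.image t).card))
        = ∏ i, p (t i) := by
      intro t
      rw [← Finset.mul_sum]
      have hmem : ∀ z : Fin N, (∃ i, t i = z) ↔ z ∈ Finset.univ.image t := by
        intro z; simp
      have hcongr : ∀ z : Fin N, (if ∃ i : Fin k, t i = z then (0:ℝ)
          else 1 / ((N:ℝ) - (Finset.univ.image t).card))
          = (if z ∈ Finset.univ.image t then (0:ℝ)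
          else 1 / ((N:ℝ) - (Finset.univ.image t).card)) := by
        intro z; exact if_congr (hmem z) rfl rfl
      have hmN : (Finset.univ.image t).card ≤ N := by
        have h := Finset.card_image_le (s := (Finset.univ : Finset (Fin k))) (f := t)
        rw [Finset.card_univ, Fintype.card_fin] at h
        omega
      have hsum : (∑ z : Fin N, if z ∈ Finset.univ.image t then (0:ℝ)
          else 1 / ((N:ℝ) - (Finset.univ.image t).card))
          = ((N - (Finset.univ.image t).card : ℕ) : ℝ)
            * (1 / ((N:ℝ) - (Finset.univ.image t).card)) := by
        rw [Finset.sum_ite, Finset.sum_const_zero, zero_add, Finset.sum_const, nsmul_eq_mul]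
        congr 2
        have hfil : Finset.univ.filter (fun z : Fin N => ¬ z ∈ Finset.univ.image t)
            = (Finset.univ.image t)ᶜ := by
          ext z; simp
        rw [hfil, Finset.card_compl, Fintype.card_fin]
      rw [Finset.sum_congr rfl fun z _ => hcongr z, hsum, Nat.cast_sub hmN,
        mul_one_div_cancel (himgpos t).ne', mul_one]
    rw [Finset.sum_congr rfl fun t _ => inner t, htot]
  -- pointwise bound
  have hNub : (0:ℝ) ≤ 1/((N:ℝ)-k) - 1/(N:ℝ) := by
    have h := one_div_le_one_div_of_le hNk (by linarith : (N:ℝ)-k ≤ (N:ℝ))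
    linarith
  have hpt : ∀ z, |A z - 1/(N:ℝ)| ≤ (1/((N:ℝ)-k) - 1/(N:ℝ)) + S z / N := by
    intro z
    have h1 := hAub z
    have h2 := hAlb z
    have h3 := hS0 z
    have h4 : (0:ℝ) ≤ S z / N := by positivity
    have hdiv : (1 - S z)/(N:ℝ) = 1/(N:ℝ) - S z/(N:ℝ) := by ring
    refine abs_le.2 ⟨by linarith, by linarith⟩
  have hsumS : ∑ z : Fin N, S z ≤ (k:ℝ) := by
    calc ∑ z : Fin N, S z ≤ ∑ z : Fin N, (k:ℝ) * p z := Finset.sum_le_sum fun z _ => hSk z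
    _ = (k:ℝ) := by rw [← Finset.mul_sum, hp1, mul_one]
  have hsumabs : ∑ z : Fin N, |A z - 1/(N:ℝ)| ≤ ((N:ℝ)/((N:ℝ)-k) - 1) + (k:ℝ)/N := by
    calc ∑ z : Fin N, |A z - 1/(N:ℝ)|
        ≤ ∑ z : Fin N, ((1/((N:ℝ)-k) - 1/(N:ℝ)) + S z / N) :=
          Finset.sum_le_sum fun z _ => hpt z
    _ = (N:ℝ) * (1/((N:ℝ)-k) - 1/(N:ℝ)) + (∑ z : Fin N, S z)/N := by
          rw [Finset.sum_add_distrib, Finset.sum_const, Finset.card_univ, Fintype.card_fin,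
            nsmul_eq_mul, ← Finset.sum_div]
    _ ≤ (N:ℝ) * (1/((N:ℝ)-k) - 1/(N:ℝ)) + (k:ℝ)/N := by gcongr
    _ = ((N:ℝ)/((N:ℝ)-k) - 1) + (k:ℝ)/N := by field_simp
  have hdiff : ∀ z, |qA z - qB z| = (1-u) * |A z - 1/(N:ℝ)| := by
    intro z
    rw [hqA' z, hqB z]
    have he : u * p z + (1-u) * A z - (u * p z + (1-u)/N) = (1-u) * (A z - 1/(N:ℝ)) := by ring
    rw [he, abs_mul, abs_of_nonneg (by linarith : (0:ℝ) ≤ 1-u)]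
  have hEq : (N:ℝ)/((N:ℝ)-k) = 1/(1 - (k:ℝ)/N) := by
    have h1 : (1:ℝ) - (k:ℝ)/N = ((N:ℝ)-k)/N := by field_simp
    rw [h1, one_div_div]
  constructor
  · have hsum_eq : ∑ z : Fin N, |qA z - qB z| = (1-u) * ∑ z : Fin N, |A z - 1/(N:ℝ)| := by
      rw [Finset.mul_sum]; exact Finset.sum_congr rfl fun z _ => hdiff z
    rw [hsum_eq, show (1:ℝ)/(1 - (k:ℝ)/N) = (N:ℝ)/((N:ℝ)-k) from hEq.symm]
    exact mul_le_mul_of_nonneg_left hsumabs (by linarith)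
  · have h1 : (1:ℝ) ≤ (N:ℝ)/((N:ℝ)-k) := by
      rw [le_div_iff₀ hNk]; linarith
    have hkN0 : (0:ℝ) ≤ (k:ℝ)/N := by positivity
    have hE0 : (0:ℝ) ≤ (1/(1 - (k:ℝ)/N) - 1) + (k:ℝ)/N := by
      rw [← hEq]; linarith
    have step1 : (1-u) * ((1/(1 - (k:ℝ)/N) - 1) + (k:ℝ)/N)
        ≤ (1/(1 - (k:ℝ)/N) - 1) + (k:ℝ)/N := by nlinarith
    have step2 : (1/(1 - (k:ℝ)/N) - 1) + (k:ℝ)/N ≤ 2*(k:ℝ)/((N:ℝ)*(1 - (k:ℝ)/N)) := by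
      have h2 : (1:ℝ) - (k:ℝ)/N = ((N:ℝ)-k)/N := by field_simp
      rw [← hEq, h2]
      have h3 : (N:ℝ)*(((N:ℝ)-k)/N) = (N:ℝ)-k := by field_simp
      rw [h3]
      have key : (N:ℝ)/((N:ℝ)-k) - 1 = (k:ℝ)/((N:ℝ)-k) := by field_simp; ring
      rw [key]
      have h4 : (k:ℝ)/N ≤ (k:ℝ)/((N:ℝ)-k) := by gcongr <;> linarith
      have h5 : 2*(k:ℝ)/((N:ℝ)-k) = (k:ℝ)/((N:ℝ)-k) + (k:ℝ)/((N:ℝ)-k) := by ring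
      linarith
    linarith
end

section
/- Let N ≥ 2, let k be an integer with 1 ≤ k < N, let p be a probability mass function on Fin N, and let z_1, …, z_k be i.i.d. samples from p. Define r(z) = E[ 1{z ∉ {z_1,…,z_k}} / (N − |{z_1,…,z_k}|) ], i.e., r is the law of a uniformly random element of the complement of the (random) set of distinct sample values. Then for every z ∈ Fin N, |r(z) − 1/N| ≤ (1/N)·(1/(1 − k/N) − 1) + k·p(z)/N. -/
open Finset

/-- Let `p` be a PMF on `Fin N` (`N ≥ 2`), `1 ≤ k < N`, and let
`r z` be the probability that a uniformly random element of the complement of the set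
of distinct values among `k` i.i.d. samples from `p` equals `z`. Then for every `z`,
`|r z - 1/N| ≤ (1/N) (1/(1-k/N) - 1) + k p(z) / N`. -/
theorem stmt11 (N k : ℕ) (hN : 2 ≤ N) (hk1 : 1 ≤ k) (hkN : k < N)
    (p : Fin N → ℝ) (hp0 : ∀ z, 0 ≤ p z) (hp1 : ∑ z : Fin N, p z = 1)
    (r : Fin N → ℝ)
    (hr : ∀ z : Fin N, r z =
      ∑ t : Fin k → Fin N, (∏ i : Fin k, p (t i)) *
        (if ∃ i : Fin k, t i = z then 0
         else 1 / ((N : ℝ) - (Finset.univ.image t).card)))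
    (z : Fin N) :
    |r z - 1 / N| ≤ (1 / (N : ℝ)) * (1 / (1 - (k : ℝ) / N) - 1)
      + (k : ℝ) * p z / N := by
  have hNpos : (0:ℝ) < N := by
    have : (2:ℝ) ≤ N := by exact_mod_cast hN
    linarith
  have hkNr : (k:ℝ) < N := by exact_mod_cast hkN
  have hNk : (0:ℝ) < (N:ℝ) - k := by linarith
  -- general product-of-sums identity
  have hprodsum : ∀ g : Fin k → Fin N → ℝ,
      (∑ t : Fin k → Fin N, ∏ j : Fin k, g j (t j)) = ∏ j : Fin k, ∑ x : Fin N, g j x := by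
    intro g
    rw [show (∑ t : Fin k → Fin N, ∏ j : Fin k, g j (t j))
        = ∑ t ∈ Fintype.piFinset (fun _ : Fin k => (Finset.univ : Finset (Fin N))),
            ∏ j : Fin k, g j (t j) by rw [Fintype.piFinset_univ],
      ← Finset.prod_univ_sum]
  set w : (Fin k → Fin N) → ℝ := fun t => ∏ i, p (t i) with hw
  have hw0 : ∀ t, 0 ≤ w t := fun t => Finset.prod_nonneg fun i _ => hp0 _
  have hsum1 : ∑ t : Fin k → Fin N, w t = 1 := by
    rw [hw, hprodsum (fun _ x => p x)]
    simp [hp1]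
  set F : (Fin k → Fin N) → ℝ := fun t =>
    if ∃ i : Fin k, t i = z then 0
    else 1 / ((N : ℝ) - (Finset.univ.image t).card) with hF
  -- Step B: marginal
  have hstepB : ∀ i0 : Fin k,
      ∑ t : Fin k → Fin N, (if t i0 = z then w t else 0) = p z := by
    intro i0
    have key : ∀ t : Fin k → Fin N, (if t i0 = z then w t else 0)
        = ∏ j : Fin k, (fun (j : Fin k) (x : Fin N) =>
            if j = i0 then (if x = z then p x else 0) else p x) j (t j) := by
      intro t
      by_cases h : t i0 = z
      · simp only [h, if_true]
        apply Finset.prod_congr rfl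
        intro j _
        by_cases hj : j = i0
        · subst hj; simp [h]
        · simp [hj]
      · simp only [h, if_false]
        symm
        apply Finset.prod_eq_zero (Finset.mem_univ i0)
        simp [h]
    rw [Finset.sum_congr rfl fun t _ => key t,
      hprodsum (fun (j : Fin k) (x : Fin N) =>
        if j = i0 then (if x = z then p x else 0) else p x)]
    have hfac : ∀ j : Fin k,
        (∑ x : Fin N, if j = i0 then (if x = z then p x else 0) else p x)
        = if j = i0 then p z else 1 := by
      intro j
      by_cases hj : j = i0
      · simp [hj]
      · simp [hj, hp1]
    calc ∏ j : Fin k, (∑ x : Fin N,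
          if j = i0 then (if x = z then p x else 0) else p x)
        = ∏ j : Fin k, (if j = i0 then p z else 1) :=
          Finset.prod_congr rfl fun j _ => hfac j
      _ = p z := by simp
  -- constant identity
  have hc : (1 / (N : ℝ)) * (1 / (1 - (k : ℝ) / N) - 1) = (k:ℝ) / ((N:ℝ) * ((N:ℝ) - k)) := by
    have h1 : (1:ℝ) - (k:ℝ)/N ≠ 0 := by
      have : (0:ℝ) < 1 - (k:ℝ)/N := by
        rw [sub_pos, div_lt_one hNpos]; exact hkNr
      linarith
    field_simp
    ring
  -- pointwise bound
  have hpoint : ∀ t, |F t - 1/(N:ℝ)| ≤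
      (if ∃ i : Fin k, t i = z then 1/(N:ℝ) else 0) + (k:ℝ)/((N:ℝ)*((N:ℝ)-k)) := by
    intro t
    by_cases h : ∃ i : Fin k, t i = z
    · simp only [hF, h, if_true]
      rw [zero_sub, abs_neg, abs_of_nonneg (by positivity)]
      have : (0:ℝ) ≤ (k:ℝ)/((N:ℝ)*((N:ℝ)-k)) := by positivity
      linarith
    · simp only [hF, h, if_false]
      set m : ℝ := ((Finset.univ.image t).card : ℝ) with hm
      have hm0 : (0:ℝ) ≤ m := by positivity
      have hmk : m ≤ (k:ℝ) := by
        rw [hm]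
        have h1 : (Finset.univ.image t).card ≤ k := by
          calc (Finset.univ.image t).card ≤ (Finset.univ : Finset (Fin k)).card :=
                Finset.card_image_le
            _ = k := by simp
        exact_mod_cast h1
      have hNm : (0:ℝ) < (N:ℝ) - m := by linarith
      have h2 : 1/((N:ℝ) - m) ≤ 1/((N:ℝ) - (k:ℝ)) :=
        one_div_le_one_div_of_le hNk (by linarith)
      have h3 : 1/(N:ℝ) ≤ 1/((N:ℝ) - m) :=
        one_div_le_one_div_of_le hNm (by linarith)
      rw [abs_of_nonneg (by linarith)]
      have h4 : 1/((N:ℝ) - (k:ℝ)) - 1/(N:ℝ) = (k:ℝ)/((N:ℝ)*((N:ℝ)-k)) := by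
        rw [div_sub_div _ _ (by linarith : ((N:ℝ)-k) ≠ 0) (by positivity : (N:ℝ) ≠ 0),
          one_mul, mul_one]
        rw [mul_comm ((N:ℝ)-k) (N:ℝ)]
        congr 1
        ring
      linarith
  -- decomposition
  have hrw : r z = ∑ t : Fin k → Fin N, w t * F t := hr z
  have hdecomp : r z - 1/(N:ℝ) = ∑ t : Fin k → Fin N, w t * (F t - 1/(N:ℝ)) := by
    rw [hrw]
    rw [show (∑ t : Fin k → Fin N, w t * (F t - 1/(N:ℝ)))
        = (∑ t : Fin k → Fin N, w t * F t) - (∑ t : Fin k → Fin N, w t) * (1/(N:ℝ)) by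
      rw [Finset.sum_mul, ← Finset.sum_sub_distrib]
      apply Finset.sum_congr rfl
      intro t _
      ring]
    rw [hsum1]
    ring
  -- union bound
  have hunion : (∑ t : Fin k → Fin N, w t * (if ∃ i : Fin k, t i = z then 1/(N:ℝ) else 0))
      ≤ (k:ℝ) * p z / N := by
    have step1 : (∑ t : Fin k → Fin N, w t * (if ∃ i : Fin k, t i = z then 1/(N:ℝ) else 0))
        ≤ ∑ t : Fin k → Fin N, ∑ i : Fin k, (if t i = z then w t else 0) * (1/(N:ℝ)) := by
      apply Finset.sum_le_sum
      intro t _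
      have hterm : ∀ j : Fin k, 0 ≤ (if t j = z then w t else 0) * (1/(N:ℝ)) := by
        intro j
        have : (0:ℝ) ≤ (if t j = z then w t else 0) := by
          split
          · exact hw0 t
          · exact le_rfl
        positivity
      by_cases h : ∃ i : Fin k, t i = z
      · obtain ⟨i, hi⟩ := h
        rw [if_pos ⟨i, hi⟩]
        calc w t * (1/(N:ℝ)) = (if t i = z then w t else 0) * (1/(N:ℝ)) := by rw [if_pos hi]
          _ ≤ _ := Finset.single_le_sum (fun j _ => hterm j) (Finset.mem_univ i)
      · rw [if_neg h, mul_zero]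
        exact Finset.sum_nonneg fun j _ => hterm j
    have step2 : (∑ t : Fin k → Fin N, ∑ i : Fin k, (if t i = z then w t else 0) * (1/(N:ℝ)))
        = (k:ℝ) * p z / N := by
      rw [Finset.sum_comm]
      have : ∀ i : Fin k,
          (∑ t : Fin k → Fin N, (if t i = z then w t else 0) * (1/(N:ℝ)))
          = p z * (1/(N:ℝ)) := by
        intro i
        rw [← Finset.sum_mul, hstepB i]
      rw [Finset.sum_congr rfl fun i _ => this i]
      simp [Finset.sum_const, mul_comm, mul_div_assoc]
      ring
    linarith
  rw [hdecomp]
  calc |∑ t : Fin k → Fin N, w t * (F t - 1/(N:ℝ))|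
      ≤ ∑ t : Fin k → Fin N, |w t * (F t - 1/(N:ℝ))| := Finset.abs_sum_le_sum_abs _ _
    _ ≤ ∑ t : Fin k → Fin N, w t *
          ((if ∃ i : Fin k, t i = z then 1/(N:ℝ) else 0) + (k:ℝ)/((N:ℝ)*((N:ℝ)-k))) := by
        apply Finset.sum_le_sum
        intro t _
        rw [abs_mul, abs_of_nonneg (hw0 t)]
        exact mul_le_mul_of_nonneg_left (hpoint t) (hw0 t)
    _ = (∑ t : Fin k → Fin N, w t * (if ∃ i : Fin k, t i = z then 1/(N:ℝ) else 0))
          + (k:ℝ)/((N:ℝ)*((N:ℝ)-k)) := by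
        simp only [mul_add]
        rw [Finset.sum_add_distrib, ← Finset.sum_mul, hsum1, one_mul]
    _ ≤ (k:ℝ) * p z / N + (k:ℝ)/((N:ℝ)*((N:ℝ)-k)) := by linarith
    _ = (1 / (N : ℝ)) * (1 / (1 - (k : ℝ) / N) - 1) + (k : ℝ) * p z / N := by
        rw [hc]; ring
end
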